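/- arXiv:2402.10842 — 12 statements merged into one kernel-verified Lean document; each statement's English description precedes it below -/
import Mathlib

section
/- Let G be a simple graph of order n ≥ 2 that contains at least one full vertex (a vertex adjacent to all other vertices of G). Then PC(G) = n, i.e., the partition of V(G) into n singleton sets is a paired coalition partition of maximum order. -/
namespace PCPaper

variable {V : Type*}

/-- `S` is a dominating set of `G`. -/
def IsDomSet (G : SimpleGraph V) (S : Set V) : Prop :=
  ∀ v : V, v ∈ S ∨ ∃ u ∈ S, G.Adj u v

/-- `S` is a paired dominating set of `G`: a dominating set such that the subgraph of `G`
induced by `S` contains a perfect matching (a matching whose vertex set is exactly `S`). -/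
def IsPairedDomSet (G : SimpleGraph V) (S : Set V) : Prop :=
  IsDomSet G S ∧ ∃ M : G.Subgraph, M.verts = S ∧ M.IsMatching

/-- Disjoint sets `A`, `B`, neither a paired dominating set, whose union is one. -/
def PairedCoalition (G : SimpleGraph V) (A B : Set V) : Prop :=
  Disjoint A B ∧ ¬ IsPairedDomSet G A ∧ ¬ IsPairedDomSet G B ∧ IsPairedDomSet G (A ∪ B)

variable [Fintype V] [DecidableEq V]

/-- `π` is a paired coalition partition of `G`: no part is a paired dominating set and every
part forms a paired coalition with some other part. -/
def IsPCPartition (G : SimpleGraph V) (π : Finpartition (Finset.univ : Finset V)) : Prop :=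
  ∀ A ∈ π.parts, ¬ IsPairedDomSet G (A : Set V) ∧
    ∃ B ∈ π.parts, B ≠ A ∧ PairedCoalition G (A : Set V) (B : Set V)

/-- The paired coalition number: the maximum number of parts of a pc-partition of `G`,
and `0` if `G` admits no pc-partition. -/
noncomputable def pcNumber (G : SimpleGraph V) : ℕ :=
  sSup {k | ∃ π : Finpartition (Finset.univ : Finset V), IsPCPartition G π ∧ π.parts.card = k}

/-- The paired coalition graph of a partition `π` of `G`: vertices are the parts of `π`,
two parts being adjacent iff they form a paired coalition in `G`. -/
def PCG (G : SimpleGraph V) (π : Finpartition (Finset.univ : Finset V)) :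
    SimpleGraph {A : Finset V // A ∈ π.parts} where
  Adj A B := PairedCoalition G ((A : Finset V) : Set V) ((B : Finset V) : Set V)
  symm := by
    constructor
    rintro A B ⟨h1, h2, h3, h4⟩
    exact ⟨h1.symm, h3, h2, by rwa [Set.union_comm]⟩
  loopless := by
    constructor
    rintro A ⟨h1, h2, h3, h4⟩
    exact h2 (by rwa [Set.union_self] at h4)

end PCPaper

open PCPaper in
lemma not_pds_singleton {V : Type*} (G : SimpleGraph V) (x : V) :
    ¬ IsPairedDomSet G {x} := by
  rintro ⟨-, M, hM, hmatch⟩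
  have hx : x ∈ M.verts := by rw [hM]; rfl
  obtain ⟨y, hy, -⟩ := hmatch hx
  have : y ∈ M.verts := hy.symm.fst_mem
  rw [hM, Set.mem_singleton_iff] at this
  subst this
  exact G.loopless.irrefl _ (M.adj_sub hy)

open PCPaper in
lemma pds_pair {V : Type*} (G : SimpleGraph V) {v x : V} (hx : x ≠ v)
    (hv : ∀ w, w ≠ v → G.Adj v w) :
    IsPairedDomSet G ({v} ∪ {x} : Set V) := by
  have hadj : G.Adj v x := hv x hx
  constructor
  · intro w
    by_cases hw : w = v
    · exact Or.inl (Or.inl hw)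
    · exact Or.inr ⟨v, Or.inl rfl, hv w hw⟩
  · exact ⟨G.subgraphOfAdj hadj, by rw [SimpleGraph.subgraphOfAdj_verts]; exact Set.insert_eq _ _,
      SimpleGraph.Subgraph.IsMatching.subgraphOfAdj hadj⟩

open PCPaper in
/-- A graph of order `n ≥ 2` with a full vertex has paired coalition number `n`. -/
theorem stmt_0 {V : Type*} [Fintype V] [DecidableEq V] (G : SimpleGraph V)
    (hn : 2 ≤ Fintype.card V) (v : V) (hv : ∀ w, w ≠ v → G.Adj v w) :
    pcNumber G = Fintype.card V := by
  have hmem : Fintype.card V ∈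
      {k | ∃ π : Finpartition (Finset.univ : Finset V), IsPCPartition G π ∧ π.parts.card = k} := by
    refine ⟨⊥, ?_, by simp [Finpartition.card_bot]⟩
    intro A hA
    rw [Finpartition.mem_bot_iff] at hA
    obtain ⟨a, -, rfl⟩ := hA
    refine ⟨by simpa using not_pds_singleton G a, ?_⟩
    by_cases ha : a = v
    · subst ha
      obtain ⟨b, hb⟩ := Fintype.exists_ne_of_one_lt_card hn a
      refine ⟨{b}, ?_, ?_, ?_, ?_, ?_, ?_⟩
      · rw [Finpartition.mem_bot_iff]; exact ⟨b, Finset.mem_univ b, rfl⟩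
      · simpa using hb
      · simp [Ne.symm hb]
      · simpa using not_pds_singleton G a
      · simpa using not_pds_singleton G b
      · simpa using pds_pair G hb hv
    · refine ⟨{v}, ?_, ?_, ?_, ?_, ?_, ?_⟩
      · rw [Finpartition.mem_bot_iff]; exact ⟨v, Finset.mem_univ v, rfl⟩
      · simpa using fun h => ha h.symm
      · simp [ha]
      · simpa using not_pds_singleton G a
      · simpa using not_pds_singleton G v
      · have := pds_pair G ha hv
        rw [Set.union_comm] at this
        simpa using this
  apply le_antisymm
  · apply csSup_le ⟨_, hmem⟩
    rintro k ⟨π, -, rfl⟩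
    simpa using π.card_parts_le_card
  · exact le_csSup ⟨Fintype.card V, by
      rintro k ⟨π, -, rfl⟩; simpa using π.card_parts_le_card⟩ hmem
end

section
/- Let G be a simple graph of order n with minimum degree δ(G) = 1, let x be a vertex of degree 1 in G, and let y be the unique neighbor of x. Then PC(G) = n if and only if y is a full vertex (i.e., y is adjacent to all other vertices of G). -/
section Aux

open PCPaper

variable {V : Type*}

lemma aux_not_pds_singleton (G : SimpleGraph V) (v : V) :
    ¬ IsPairedDomSet G {v} := by
  rintro ⟨-, M, hMv, hM⟩
  obtain ⟨w, hw, -⟩ := hM (by rw [hMv]; rfl)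
  have hwv : w = v := by
    have := hw.snd_mem
    rwa [hMv, Set.mem_singleton_iff] at this
  exact G.irrefl (hwv ▸ hw.adj_sub)

lemma aux_pds_pair {G : SimpleGraph V} {a b : V} (hab : G.Adj a b)
    (hdom : ∀ w, w ≠ a → w ≠ b → G.Adj a w) : IsPairedDomSet G {a, b} := by
  refine ⟨fun w => ?_, G.subgraphOfAdj hab, by simp,
    SimpleGraph.Subgraph.IsMatching.subgraphOfAdj hab⟩
  by_cases h1 : w = a
  · exact Or.inl (by simp [h1])
  by_cases h2 : w = b
  · exact Or.inl (by simp [h2])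
  · exact Or.inr ⟨a, by simp, hdom w h1 h2⟩

end Aux

open PCPaper in
/-- For a graph with minimum degree 1, with `x` a vertex of degree 1 and `y` its neighbor,
`PC(G) = n` iff `y` is a full vertex. -/
theorem stmt_1 {V : Type*} [Fintype V] [DecidableEq V] (G : SimpleGraph V)
    [DecidableRel G.Adj] (x y : V)
    (hδ : ∀ v, 1 ≤ G.degree v) (hx : G.degree x = 1) (hxy : G.Adj x y) :
    pcNumber G = Fintype.card V ↔ ∀ w, w ≠ y → G.Adj y w := by
  have hcardpos : 0 < Fintype.card V := Fintype.card_pos_iff.2 ⟨x⟩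
  have hbdd : BddAbove {k | ∃ π : Finpartition (Finset.univ : Finset V),
      IsPCPartition G π ∧ π.parts.card = k} := by
    refine ⟨Fintype.card V, ?_⟩
    rintro k ⟨π, -, rfl⟩
    simpa using π.card_parts_le_card
  constructor
  · intro hpc w hwy
    have hmem : Fintype.card V ∈ {k | ∃ π : Finpartition (Finset.univ : Finset V),
        IsPCPartition G π ∧ π.parts.card = k} := by
      rw [← hpc, pcNumber]
      apply Nat.sSup_mem ?_ hbdd
      by_contra h
      rw [Set.not_nonempty_iff_eq_empty] at h
      rw [pcNumber, h, csSup_empty] at hpc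
      simp at hpc
      omega
    obtain ⟨π, hπ, hcard⟩ := hmem
    have hall : ∀ A ∈ π.parts, A.card = 1 := by
      have h1 : ∑ _A ∈ π.parts, (1 : ℕ) = ∑ A ∈ π.parts, A.card := by
        rw [π.sum_card_parts, Finset.sum_const, smul_eq_mul, mul_one, hcard,
          Finset.card_univ]
      intro A hA
      have := (Finset.sum_eq_sum_iff_of_le
        (fun i hi => (π.nonempty_of_mem_parts hi).card_pos)).1 h1 A hA
      omega
    obtain ⟨A, hA, hxA⟩ := π.exists_mem (Finset.mem_univ x)
    obtain ⟨a, ha⟩ := Finset.card_eq_one.1 (hall A hA)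
    rw [ha, Finset.mem_singleton] at hxA
    subst hxA
    obtain ⟨-, B, hB, hBA, hdisj, -, -, hpds⟩ := hπ A hA
    obtain ⟨u, hu⟩ := Finset.card_eq_one.1 (hall B hB)
    rw [ha, hu, Finset.coe_singleton, Finset.coe_singleton, Set.singleton_union] at hpds
    obtain ⟨hdomset, M, hMv, hM⟩ := hpds
    obtain ⟨w', hw', -⟩ := hM (show x ∈ M.verts by rw [hMv]; exact Set.mem_insert _ _)
    have hw'x : w' ≠ x := fun h => G.irrefl (h ▸ hw'.adj_sub)
    have hw'mem : w' ∈ ({x, u} : Set V) := hMv ▸ hw'.snd_mem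
    have hw'u : w' = u := by
      rcases hw'mem with h | h
      · exact absurd h hw'x
      · exact h
    have hadjxu : G.Adj x u := hw'u ▸ hw'.adj_sub
    have hnb : G.neighborFinset x = {y} := by
      obtain ⟨b, hb⟩ := Finset.card_eq_one.1
        (show (G.neighborFinset x).card = 1 from hx ▸ rfl)
      have hy : y ∈ G.neighborFinset x := (SimpleGraph.mem_neighborFinset _ _ _).2 hxy
      rw [hb, Finset.mem_singleton] at hy
      rw [hb, hy]
    have huy : u = y := by
      have := (SimpleGraph.mem_neighborFinset _ _ _).2 hadjxu
      rwa [hnb, Finset.mem_singleton] at this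
    subst huy
    by_cases hwx : w = x
    · subst hwx; exact hxy.symm
    rcases hdomset w with h | ⟨z, hz, hadj⟩
    · rcases h with h | h
      · exact absurd h hwx
      · exact absurd h hwy
    · rcases hz with hz | hz
      · subst hz
        have := (SimpleGraph.mem_neighborFinset _ _ _).2 hadj
        rw [hnb, Finset.mem_singleton] at this
        exact absurd this hwy
      · rw [Set.mem_singleton_iff] at hz
        subst hz
        exact hadj
  · intro hfull
    have hmem : Fintype.card V ∈ {k | ∃ π : Finpartition (Finset.univ : Finset V),
        IsPCPartition G π ∧ π.parts.card = k} := by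
      refine ⟨⊥, ?_, by rw [Finpartition.card_bot, Finset.card_univ]⟩
      intro A hA
      rw [Finpartition.mem_bot_iff] at hA
      obtain ⟨v, -, rfl⟩ := hA
      refine ⟨by simpa using aux_not_pds_singleton G v, ?_⟩
      by_cases hv : v = y
      · subst hv
        refine ⟨{x}, by rw [Finpartition.mem_bot_iff]; exact ⟨x, Finset.mem_univ x, rfl⟩,
          by simp [hxy.ne], ?_, ?_, ?_, ?_⟩
        · simp [Set.disjoint_singleton_left, hxy.ne']
        · simpa using aux_not_pds_singleton G v
        · simpa using aux_not_pds_singleton G x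
        · have heq : (↑({v} : Finset V) ∪ ↑({x} : Finset V) : Set V) = {v, x} := by
            simp [Set.singleton_union, Set.pair_comm]
          rw [heq]
          exact aux_pds_pair hxy.symm (fun w h1 _ => hfull w h1)
      · refine ⟨{y}, by rw [Finpartition.mem_bot_iff]; exact ⟨y, Finset.mem_univ y, rfl⟩,
          by simp [Ne.symm hv], ?_, ?_, ?_, ?_⟩
        · simp [Set.disjoint_singleton_left, hv]
        · simpa using aux_not_pds_singleton G v
        · simpa using aux_not_pds_singleton G y
        · have heq : (↑({v} : Finset V) ∪ ↑({y} : Finset V) : Set V) = {y, v} := by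
            ext w; simp [or_comm]
          rw [heq]
          exact aux_pds_pair (hfull v hv) (fun w h1 _ => hfull w h1)
    rw [pcNumber]
    apply le_antisymm
    · apply csSup_le ⟨_, hmem⟩
      rintro k ⟨π, -, rfl⟩
      simpa using π.card_parts_le_card
    · exact le_csSup hbdd hmem
end

section
/- Let G be a simple graph with minimum degree δ(G) = 1, let S be the set of support vertices of G, and let π be a pc-partition of G. Then for every pair (A, B) of parts of π that form a paired coalition, it holds that S ⊆ A ∪ B. -/
open PCPaper in
/-- If `δ(G) = 1` and `π` is a pc-partition of `G`, then every pair of pc-partners in `π`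
together contains all support vertices of `G`. -/
theorem stmt_2 {V : Type*} [Fintype V] [DecidableEq V] (G : SimpleGraph V)
    [DecidableRel G.Adj]
    (hδ : ∀ v, 1 ≤ G.degree v) (hx : ∃ x, G.degree x = 1)
    (π : Finpartition (Finset.univ : Finset V)) (hπ : IsPCPartition G π)
    (A B : Finset V) (hA : A ∈ π.parts) (hB : B ∈ π.parts)
    (hAB : PairedCoalition G (A : Set V) (B : Set V)) :
    {v : V | ∃ u, G.Adj v u ∧ G.degree u = 1} ⊆ (A : Set V) ∪ (B : Set V) := by
  rintro v ⟨u, hvu, hdeg⟩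
  obtain ⟨hdisj, hnA, hnB, hdom, M, hMverts, hM⟩ := hAB
  have hnb : ∀ w, G.Adj u w → w = v := by
    intro w hw
    have h1 : (G.neighborFinset u).card = 1 := hdeg
    obtain ⟨x, hx⟩ := Finset.card_eq_one.mp h1
    have hwx : w ∈ G.neighborFinset u := by simpa using hw
    have hvx : v ∈ G.neighborFinset u := by simpa using hvu.symm
    rw [hx, Finset.mem_singleton] at hwx hvx
    rw [hwx, hvx]
  by_cases hu : u ∈ (A : Set V) ∪ (B : Set V)
  · have huM : u ∈ M.verts := by rw [hMverts]; exact hu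
    obtain ⟨w, hw, -⟩ := hM huM
    have hwv : w = v := hnb w hw.adj_sub
    have : w ∈ M.verts := M.edge_vert hw.symm
    rw [hMverts] at this
    rwa [hwv] at this
  · rcases hdom u with h | ⟨w, hwmem, hw⟩
    · exact absurd h hu
    · have := hnb w hw.symm; subst this; exact hwmem
end

section
/- Let G be a simple graph with minimum degree δ(G) = 1 and PC(G) ≥ 3, and let π be a pc-partition of G of maximum order PC(G). Then there exists a part of π that contains all support vertices of G. -/
/-- A leaf's unique neighbor. -/
lemma leaf_nbr_eq {V : Type*} [Fintype V] {G : SimpleGraph V} [DecidableRel G.Adj]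
    {u v w : V} (hadj : G.Adj v u) (hdeg : G.degree u = 1) (hw : G.Adj u w) : w = v := by
  have h1 : v ∈ G.neighborFinset u := by
    rw [SimpleGraph.mem_neighborFinset]; exact hadj.symm
  have h2 : w ∈ G.neighborFinset u := by
    rw [SimpleGraph.mem_neighborFinset]; exact hw
  exact Finset.card_le_one.mp (le_of_eq hdeg) _ h2 _ h1

/-- Every paired dominating set contains every support vertex. -/
lemma supp_mem_pds {V : Type*} [Fintype V] {G : SimpleGraph V} [DecidableRel G.Adj]
    {u v : V} {S : Set V} (hadj : G.Adj v u) (hdeg : G.degree u = 1)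
    (hS : PCPaper.IsPairedDomSet G S) : v ∈ S := by
  obtain ⟨hdom, M, hMv, hM⟩ := hS
  rcases hdom u with hu | ⟨w, hwS, hwadj⟩
  · have huM : u ∈ M.verts := hMv ▸ hu
    obtain ⟨w, hw, -⟩ := hM huM
    have hwv : w = v := leaf_nbr_eq hadj hdeg (M.adj_sub hw)
    have : w ∈ M.verts := M.edge_vert hw.symm
    rw [hwv] at this
    exact hMv ▸ this
  · have : w = v := leaf_nbr_eq hadj hdeg hwadj.symm
    exact this ▸ hwS

open PCPaper in
/-- If `δ(G) = 1` and `PC(G) ≥ 3`, then any maximum pc-partition has a part containing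
all support vertices of `G`. -/
theorem stmt_3 {V : Type*} [Fintype V] [DecidableEq V] (G : SimpleGraph V)
    [DecidableRel G.Adj]
    (hδ : ∀ v, 1 ≤ G.degree v) (hx : ∃ x, G.degree x = 1)
    (hpc : 3 ≤ pcNumber G)
    (π : Finpartition (Finset.univ : Finset V)) (hπ : IsPCPartition G π)
    (hmax : π.parts.card = pcNumber G) :
    ∃ A ∈ π.parts, ∀ v : V, (∃ u, G.Adj v u ∧ G.degree u = 1) → v ∈ A := by
  classical
  -- pick a leaf x and its support vertex v0
  obtain ⟨x, hxdeg⟩ := hx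
  obtain ⟨v0, hv0adj⟩ : ∃ v0, G.Adj x v0 := by
    have := hδ x
    rw [← SimpleGraph.card_neighborFinset_eq_degree] at this
    obtain ⟨v0, hv0⟩ := Finset.card_pos.mp this
    exact ⟨v0, (SimpleGraph.mem_neighborFinset G x v0).mp hv0⟩
  have hv0supp : G.Adj v0 x := hv0adj.symm
  -- the part A containing v0
  obtain ⟨A, hA, hv0A⟩ := π.exists_mem (Finset.mem_univ v0)
  refine ⟨A, hA, ?_⟩
  rintro v ⟨u, hvu, hudeg⟩
  by_contra hvA
  obtain ⟨B, hB, hvB⟩ := π.exists_mem (Finset.mem_univ v)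
  have hAB : B ≠ A := fun h => hvA (h ▸ hvB)
  -- a third part C
  have hcard : 3 ≤ π.parts.card := hmax ▸ hpc
  have : 1 ≤ ((π.parts.erase A).erase B).card := by
    have h1 : π.parts.card - 2 ≤ ((π.parts.erase A).erase B).card := by
      calc π.parts.card - 2 ≤ (π.parts.erase A).card - 1 := by
            have := Finset.pred_card_le_card_erase (a := A) (s := π.parts)
            omega
        _ ≤ ((π.parts.erase A).erase B).card := by
            have := Finset.pred_card_le_card_erase (a := B) (s := π.parts.erase A)
            omega
    omega
  obtain ⟨C, hC⟩ := Finset.card_pos.mp this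
  have hCB : C ≠ B := (Finset.mem_erase.mp hC).1
  have hCA : C ≠ A := (Finset.mem_erase.mp (Finset.mem_erase.mp hC).2).1
  have hCparts : C ∈ π.parts := (Finset.mem_erase.mp (Finset.mem_erase.mp hC).2).2
  -- coalition partner D of C
  obtain ⟨-, D, hD, -, -, -, -, hPDS⟩ := hπ C hCparts
  -- v0 ∈ C ∪ D
  have hv0CD : v0 ∈ (C : Set V) ∪ (D : Set V) := supp_mem_pds hv0supp hxdeg hPDS
  have hvCD : v ∈ (C : Set V) ∪ (D : Set V) := supp_mem_pds hvu hudeg hPDS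
  have hDA : D = A := by
    rcases hv0CD with h | h
    · exact absurd (π.eq_of_mem_parts hCparts hA h hv0A) hCA
    · exact π.eq_of_mem_parts hD hA h hv0A
  have hDB : D = B := by
    rcases hvCD with h | h
    · exact absurd (π.eq_of_mem_parts hCparts hB h hvB) hCB
    · exact π.eq_of_mem_parts hD hB h hvB
  exact hAB (hDB ▸ hDA)
end

section
/- Let G be a simple graph with minimum degree δ(G) = 1 and PC(G) ≥ 3, let π be a pc-partition of G of maximum order PC(G), and let S be a part of π containing all support vertices of G. Then for every pair (A, B) of parts of π that form a paired coalition, it holds that S ∈ {A, B}. -/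
open PCPaper in
/-- If `δ(G) = 1`, `PC(G) ≥ 3`, `π` is a maximum pc-partition and `S ∈ π` contains all
support vertices, then every paired coalition in `π` involves `S`. -/
theorem stmt_4 {V : Type*} [Fintype V] [DecidableEq V] (G : SimpleGraph V)
    [DecidableRel G.Adj]
    (hδ : ∀ v, 1 ≤ G.degree v) (hx : ∃ x, G.degree x = 1)
    (hpc : 3 ≤ pcNumber G)
    (π : Finpartition (Finset.univ : Finset V)) (hπ : IsPCPartition G π)
    (hmax : π.parts.card = pcNumber G)
    (S : Finset V) (hS : S ∈ π.parts)
    (hsupp : ∀ v : V, (∃ u, G.Adj v u ∧ G.degree u = 1) → v ∈ S) :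
    ∀ A ∈ π.parts, ∀ B ∈ π.parts,
      PairedCoalition G (A : Set V) (B : Set V) → S = A ∨ S = B := by
  intro A hA B hB hAB
  obtain ⟨x, hxdeg⟩ := hx
  -- x has a unique neighbor v
  have hcard : (G.neighborFinset x).card = 1 := hxdeg
  obtain ⟨v, hv⟩ := Finset.card_eq_one.mp hcard
  have hadj : G.Adj x v := by
    have : v ∈ G.neighborFinset x := by rw [hv]; exact Finset.mem_singleton_self v
    exact (SimpleGraph.mem_neighborFinset _ _ _).mp this
  have huniq : ∀ u, G.Adj x u → u = v := by
    intro u hu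
    have : u ∈ G.neighborFinset x := (SimpleGraph.mem_neighborFinset _ _ _).mpr hu
    rw [hv] at this
    exact Finset.mem_singleton.mp this
  have hvS : v ∈ S := hsupp v ⟨x, hadj.symm, hxdeg⟩
  -- v ∈ A ∪ B
  obtain ⟨hdisj, hnA, hnB, hdom, M, hMverts, hMmatch⟩ := hAB
  have hvAB : v ∈ (A : Set V) ∪ (B : Set V) := by
    rcases hdom x with hx' | ⟨u, huAB, huadj⟩
    · -- x ∈ A ∪ B, so x is matched in M to its unique neighbor v
      rw [← hMverts] at hx'
      obtain ⟨w, hw, -⟩ := hMmatch hx'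
      have hGadj : G.Adj x w := M.adj_sub hw
      have hwv : w = v := huniq w hGadj
      rw [← hMverts]
      rw [← hwv]
      exact M.edge_vert hw.symm
    · have := huniq u huadj.symm
      rwa [this] at huAB
  rcases hvAB with hvA | hvB
  · left
    by_contra hne
    exact Finset.disjoint_left.mp (π.disjoint hS hA hne) hvS (by simpa using hvA)
  · right
    by_contra hne
    exact Finset.disjoint_left.mp (π.disjoint hS hB hne) hvS (by simpa using hvB)
end

section
/- Let G be a simple graph with minimum degree δ(G) = 1, and let π be a pc-partition of G with k parts. Then the paired coalition graph PCG(G, π) is isomorphic to the star K_{1,k−1}. -/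
open PCPaper in
/-- If `δ(G) = 1` and `π` is a pc-partition of `G` of order `k`, then
`PCG(G, π) ≃ K_{1,k-1}`. -/
theorem stmt_5 {V : Type*} [Fintype V] [DecidableEq V] (G : SimpleGraph V)
    [DecidableRel G.Adj]
    (hδ : ∀ v, 1 ≤ G.degree v) (hx : ∃ x, G.degree x = 1)
    (π : Finpartition (Finset.univ : Finset V)) (hπ : IsPCPartition G π)
    (k : ℕ) (hk : π.parts.card = k) :
    Nonempty (PCG G π ≃g completeBipartiteGraph (Fin 1) (Fin (k - 1))) := by
  classical
  obtain ⟨x, hxdeg⟩ := hx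
  obtain ⟨y, hy⟩ := Finset.card_eq_one.mp (show (G.neighborFinset x).card = 1 from hxdeg)
  have huniq : ∀ u, G.Adj x u → u = y := fun u h =>
    Finset.mem_singleton.mp (hy ▸ (G.mem_neighborFinset x u).mpr h)
  -- every paired dominating set contains y
  have hkey : ∀ S : Set V, IsPairedDomSet G S → y ∈ S := by
    rintro S ⟨hdom, M, hMv, hM⟩
    rcases hdom x with hxS | ⟨u, huS, hux⟩
    · obtain ⟨w, hw, -⟩ := hM (show x ∈ M.verts from hMv ▸ hxS)
      have hwy : w = y := huniq w (M.adj_sub hw)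
      subst hwy
      exact hMv ▸ M.edge_vert hw.symm
    · exact (huniq u hux.symm) ▸ huS
  obtain ⟨Ay, hAymem, hyAy⟩ := π.exists_mem (Finset.mem_univ y)
  have hpartuniq : ∀ B ∈ π.parts, y ∈ B → B = Ay := fun B hB hyB =>
    π.eq_of_mem_parts hB hAymem hyB hyAy
  set AySub : {A : Finset V // A ∈ π.parts} := ⟨Ay, hAymem⟩ with hAySub
  -- adjacency characterization
  have hAdj : ∀ A B : {A : Finset V // A ∈ π.parts}, (PCG G π).Adj A B ↔
      ((A = AySub ∧ B ≠ AySub) ∨ (A ≠ AySub ∧ B = AySub)) := by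
    have hnbr : ∀ A : {A : Finset V // A ∈ π.parts}, A ≠ AySub → (PCG G π).Adj AySub A := by
      intro A hA
      obtain ⟨-, B, hBmem, hBne, hco⟩ := hπ A.1 A.2
      have hyun : y ∈ ((A.1 : Set V) ∪ (B : Set V)) := hkey _ hco.2.2.2
      have hyB : y ∈ B := by
        rcases hyun with h | h
        · exact absurd (Subtype.ext (hpartuniq A.1 A.2 h)) hA
        · exact h
      have hBAy : B = Ay := hpartuniq B hBmem hyB
      subst hBAy
      exact (PCG G π).adj_symm hco
    intro A B
    constructor
    · intro h
      have hAB : A ≠ B := fun he => (PCG G π).loopless.irrefl A (he ▸ h)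
      have hco : PairedCoalition G ((A.1 : Finset V) : Set V) ((B.1 : Finset V) : Set V) := h
      have hyun : y ∈ ((A.1 : Set V) ∪ (B.1 : Set V)) := hkey _ hco.2.2.2
      rcases hyun with hyA | hyB
      · left
        have hA : A = AySub := Subtype.ext (hpartuniq A.1 A.2 hyA)
        exact ⟨hA, fun hB => hAB (hA.trans hB.symm)⟩
      · right
        have hB : B = AySub := Subtype.ext (hpartuniq B.1 B.2 hyB)
        exact ⟨fun hA => hAB (hA.trans hB.symm), hB⟩
    · rintro (⟨hA, hB⟩ | ⟨hA, hB⟩)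
      · exact hA ▸ hnbr B hB
      · exact hB ▸ ((PCG G π).adj_symm (hnbr A hA))
  -- build the equivalence
  have hcard : Fintype.card {A : Finset V // A ∈ π.parts} = k := by
    rw [Fintype.card_coe]; exact hk
  have hcard1 : Fintype.card {B : {A : Finset V // A ∈ π.parts} // B = AySub} = 1 :=
    Fintype.card_subtype_eq AySub
  have hcardk : Fintype.card {B : {A : Finset V // A ∈ π.parts} // B ≠ AySub} = k - 1 := by
    rw [Fintype.card_subtype_compl, hcard, hcard1]
  let e1 : {A : Finset V // A ∈ π.parts} ≃
      {B : {A : Finset V // A ∈ π.parts} // B = AySub} ⊕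
      {B : {A : Finset V // A ∈ π.parts} // ¬ B = AySub} :=
    (Equiv.sumCompl (· = AySub)).symm
  let e2 := Fintype.equivFinOfCardEq hcard1
  let e3 := Fintype.equivFinOfCardEq hcardk
  let e : {A : Finset V // A ∈ π.parts} ≃ Fin 1 ⊕ Fin (k - 1) :=
    e1.trans (e2.sumCongr e3)
  have hleft : ∀ A, (e A).isLeft = true ↔ A = AySub := by
    intro A
    by_cases h : A = AySub <;>
      simp [e, e1, Equiv.sumCompl, h]
  refine ⟨⟨e, ?_⟩⟩
  intro A B
  rw [hAdj A B]
  have hL : ∀ (C : {A : Finset V // A ∈ π.parts}) (a : Fin 1), e C = Sum.inl a → C = AySub := by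
    intro C a h
    exact (hleft C).mp (by rw [h]; rfl)
  have hR : ∀ (C : {A : Finset V // A ∈ π.parts}) (a : Fin (k - 1)), e C = Sum.inr a → C ≠ AySub := by
    intro C a h hC
    have := (hleft C).mpr hC
    rw [h] at this
    exact absurd this (by simp)
  rcases hEA : e A with a | a <;> rcases hEB : e B with b | b
  · simp [completeBipartiteGraph, hEA, hEB, hL A a hEA, hL B b hEB]
  · simp [completeBipartiteGraph, hEA, hEB, hL A a hEA, hR B b hEB]
  · simp [completeBipartiteGraph, hEA, hEB, hR A a hEA, hL B b hEB]
  · simp [completeBipartiteGraph, hEA, hEB, hR A a hEA, hR B b hEB]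
end

section
/- For the path P_n on n ≥ 2 vertices, PC(P_n) = 2 if n = 2 or n = 4, and PC(P_n) = 3 otherwise. -/
section Aux

open PCPaper SimpleGraph Finset

variable {n : ℕ}

/-- membership in a set of `Fin n` via natural index -/
def inS (S : Set (Fin n)) (k : ℕ) : Prop := ∃ h : k < n, (⟨k, h⟩ : Fin n) ∈ S

lemma inS_of_mem {S : Set (Fin n)} {v : Fin n} (h : v ∈ S) : inS S v.val := ⟨v.isLt, h⟩

lemma not_inS_of_ge {S : Set (Fin n)} {k : ℕ} (h : n ≤ k) : ¬ inS S k := by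
  rintro ⟨hlt, -⟩; omega

/-- Build a perfect matching on `S` from an index pairing function. -/
lemma matching_of_g (S : Set (Fin n)) (g : ℕ → ℕ)
    (hg : ∀ k, inS S k → inS S (g k) ∧ g (g k) = k ∧ (k + 1 = g k ∨ g k + 1 = k)) :
    ∃ M : (pathGraph n).Subgraph, M.verts = S ∧ M.IsMatching := by
  refine ⟨{ verts := S,
            Adj := fun a b => a ∈ S ∧ b ∈ S ∧ g a.val = b.val ∧ (pathGraph n).Adj a b,
            adj_sub := fun h => h.2.2.2,
            edge_vert := fun h => h.1,
            symm := ?_ }, rfl, ?_⟩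
  · constructor
    rintro a b ⟨ha, hb, hab, hadj⟩
    refine ⟨hb, ha, ?_, hadj.symm⟩
    have := (hg a.val (inS_of_mem ha)).2.1
    rw [hab] at this
    exact this
  · intro v hv
    simp only [Set.mem_setOf_eq] at hv
    obtain ⟨⟨hlt, hmem⟩, hgg, hadj⟩ := hg v.val (inS_of_mem hv)
    refine ⟨⟨g v.val, hlt⟩, ⟨hv, hmem, rfl, ?_⟩, ?_⟩
    · rw [pathGraph_adj]; simpa using hadj
    · rintro y ⟨-, -, hy, -⟩
      exact Fin.ext hy.symm

lemma matching_unique {G : SimpleGraph V} {M : G.Subgraph} (hm : M.IsMatching)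
    {v w w' : V} (h : M.Adj v w) (h' : M.Adj v w') : w = w' :=
  (hm (M.edge_vert h)).unique h h'

lemma chain_odd {M : (pathGraph n).Subgraph} (hm : M.IsMatching) :
    ∀ L i j : ℕ, j - i ≤ L → i ≤ j →
      (∀ k, i ≤ k → k ≤ j → inS M.verts k) →
      ∀ (hi : i < n) (hi1 : i + 1 < n), M.Adj ⟨i, hi⟩ ⟨i+1, hi1⟩ →
      ¬ inS M.verts (j+1) → Odd (j - i) := by
  intro L
  induction L with
  | zero =>
    intro i j hL hij hrange hi hi1 hadj hj1
    have hji : j = i := by omega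
    exfalso
    apply hj1
    rw [hji]
    exact ⟨hi1, M.edge_vert (M.adj_symm hadj)⟩
  | succ L IH =>
    intro i j hL hij hrange hi hi1 hadj hj1
    rcases Nat.lt_or_ge j (i+2) with hj2 | hj2
    · -- j = i or j = i + 1
      rcases Nat.eq_or_lt_of_le hij with rfl | hlt
      · exfalso
        exact hj1 ⟨hi1, M.edge_vert (M.adj_symm hadj)⟩
      · have : j = i + 1 := by omega
        rw [this]
        exact ⟨0, by omega⟩
    · -- j ≥ i + 2
      obtain ⟨h2n, hmem2⟩ := hrange (i+2) (by omega) hj2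
      obtain ⟨w, hw⟩ := (hm hmem2).exists
      have hwadj := M.adj_sub hw
      rw [pathGraph_adj] at hwadj
      simp only at hwadj
      rcases hwadj with hw3 | hw1
      · -- w.val = i + 3
        have h3n : i + 3 < n := hw3 ▸ w.isLt
        have hw' : w = ⟨i+3, h3n⟩ := Fin.ext hw3.symm
        rw [hw'] at hw
        have := IH (i+2) j (by omega) hj2
          (fun k hk1 hk2 => hrange k (by omega) hk2) h2n h3n hw hj1
        obtain ⟨m, hmm⟩ := this
        exact ⟨m + 1, by omega⟩
      · -- w.val = i + 1, contradiction
        exfalso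
        have hw' : w = ⟨i+1, hi1⟩ := Fin.ext (show w.val = i + 1 by omega)
        rw [hw'] at hw
        have h1 : M.Adj ⟨i+1, hi1⟩ ⟨i+2, h2n⟩ := M.adj_symm hw
        have h2 : M.Adj ⟨i+1, hi1⟩ ⟨i, hi⟩ := M.adj_symm hadj
        have := matching_unique hm h1 h2
        simp [Fin.ext_iff] at this

/-- A run of the vertex set of a matching which cannot be extended on either side
has an even number of vertices. -/
lemma run_odd {M : (pathGraph n).Subgraph} (hm : M.IsMatching) {i j : ℕ}
    (hij : i ≤ j) (hrange : ∀ k, i ≤ k → k ≤ j → inS M.verts k)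
    (hleft : i = 0 ∨ ¬ inS M.verts (i-1)) (hright : ¬ inS M.verts (j+1)) :
    Odd (j - i) := by
  obtain ⟨hi, hmemi⟩ := hrange i le_rfl hij
  obtain ⟨w, hw⟩ := (hm hmemi).exists
  have hwadj := M.adj_sub hw
  rw [pathGraph_adj] at hwadj
  simp only at hwadj
  rcases hwadj with hw1 | hwm
  · -- w.val = i + 1
    have hi1 : i + 1 < n := hw1 ▸ w.isLt
    have hw' : w = ⟨i+1, hi1⟩ := Fin.ext hw1.symm
    rw [hw'] at hw
    exact chain_odd hm (j - i) i j le_rfl hij hrange hi hi1 hw hright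
  · -- w.val + 1 = i : contradicts the left boundary
    exfalso
    have hwin : inS M.verts w.val := ⟨w.isLt, by simpa using M.edge_vert (M.adj_symm hw)⟩
    rcases hleft with h0 | hnot
    · omega
    · apply hnot
      have : w.val = i - 1 := by omega
      rwa [this] at hwin

end Aux


section Aux2

open PCPaper SimpleGraph

variable {n : ℕ}

open Classical in
/-- length of the maximal run of `S` ending at index `v`. -/
noncomputable def runLen (S : Set (Fin n)) : ℕ → ℕ
  | 0 => if inS S 0 then 1 else 0
  | (v+1) => if inS S (v+1) then runLen S v + 1 else 0

lemma runLen_of_not {S : Set (Fin n)} {v : ℕ} (h : ¬ inS S v) : runLen S v = 0 := by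
  cases v <;> simp [runLen, h]

lemma runLen_zero_mem {S : Set (Fin n)} (h : inS S 0) : runLen S 0 = 1 := by
  simp [runLen, h]

lemma runLen_succ_mem {S : Set (Fin n)} {v : ℕ} (h : inS S (v+1)) :
    runLen S (v+1) = runLen S v + 1 := by
  simp [runLen, h]

lemma mem_of_runLen_pos {S : Set (Fin n)} {v : ℕ} (h : 1 ≤ runLen S v) : inS S v := by
  by_contra hc
  rw [runLen_of_not hc] at h
  omega

lemma runLen_le {S : Set (Fin n)} : ∀ v : ℕ, runLen S v ≤ v + 1 := by
  intro v
  induction v with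
  | zero => by_cases h : inS S 0 <;> simp [runLen, h]
  | succ v IH => by_cases h : inS S (v+1) <;> simp [runLen, h] <;> omega

lemma mem_of_lt_runLen {S : Set (Fin n)} : ∀ v k : ℕ, k < runLen S v → inS S (v - k) := by
  intro v
  induction v with
  | zero =>
    intro k hk
    have h1 := runLen_le (S := S) 0
    have h0 : k = 0 := by omega
    subst h0
    exact mem_of_runLen_pos hk
  | succ v IH =>
    intro k hk
    by_cases h : inS S (v+1)
    · rw [runLen_succ_mem h] at hk
      match k with
      | 0 => exact h
      | (k'+1) =>
        have heq : v + 1 - (k'+1) = v - k' := by omega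
        rw [heq]
        exact IH k' (by omega)
    · rw [runLen_of_not h] at hk; omega

lemma not_mem_sub_runLen {S : Set (Fin n)} :
    ∀ v : ℕ, runLen S v ≤ v → ¬ inS S (v - runLen S v) := by
  intro v
  induction v with
  | zero =>
    intro hv hc
    rw [Nat.zero_sub] at hc
    rw [runLen_zero_mem hc] at hv
    omega
  | succ v IH =>
    intro hv
    by_cases h : inS S (v+1)
    · rw [runLen_succ_mem h] at hv ⊢
      have heq : v + 1 - (runLen S v + 1) = v - runLen S v := by omega
      rw [heq]
      exact IH (by omega)
    · rw [runLen_of_not h]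
      simpa using h

/-- If every maximal run of `S` is even, then the path graph restricted to `S`
has a perfect matching. -/
lemma matching_of_even_runs (S : Set (Fin n))
    (h : ∀ v, inS S v → ¬ inS S (v+1) → Even (runLen S v)) :
    ∃ M : (pathGraph n).Subgraph, M.verts = S ∧ M.IsMatching := by
  apply matching_of_g S (fun k => if runLen S k % 2 = 1 then k + 1 else k - 1)
  intro k hk
  have hpos : 1 ≤ runLen S k := by
    match k with
    | 0 => rw [runLen_zero_mem hk]
    | (v+1) => rw [runLen_succ_mem hk]; omega
  by_cases hodd : runLen S k % 2 = 1
  · simp only [if_pos hodd]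
    have hk1 : inS S (k+1) := by
      by_contra hc
      have := h k hk hc
      rw [Nat.even_iff] at this
      omega
    have hr1 : runLen S (k+1) = runLen S k + 1 := runLen_succ_mem hk1
    have hne : ¬ (runLen S (k+1) % 2 = 1) := by rw [hr1]; omega
    refine ⟨hk1, ?_, Or.inl (by first | rfl | trivial)⟩
    simp only [if_neg hne]
    omega
  · simp only [if_neg hodd]
    match k, hk, hpos, hodd with
    | 0, hk, hpos, hodd => exact absurd (show runLen S 0 % 2 = 1 by rw [runLen_zero_mem hk]) hodd
    | (v+1), hk, hpos, hodd =>
      have hr := runLen_succ_mem hk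
      have hvpos : runLen S v % 2 = 1 := by omega
      have hmv : inS S v := mem_of_runLen_pos (by omega)
      clear hr
      have hsub : v + 1 - 1 = v := rfl
      rw [hsub]
      refine ⟨hmv, ?_, Or.inr (by first | rfl | trivial)⟩
      rw [if_pos hvpos]

end Aux2


section Aux3

open PCPaper SimpleGraph

variable {n : ℕ}

lemma one_mem_of_PDS (hn : 2 ≤ n) {S : Set (Fin n)}
    (h : IsPairedDomSet (pathGraph n) S) : (⟨1, by omega⟩ : Fin n) ∈ S := by
  obtain ⟨hdom, M, hMv, hMm⟩ := h
  rcases hdom ⟨0, by omega⟩ with h0 | ⟨u, hu, hadj⟩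
  · rw [← hMv] at h0
    obtain ⟨w, hw⟩ := (hMm h0).exists
    have hwadj := M.adj_sub hw
    rw [pathGraph_adj] at hwadj
    simp only at hwadj
    have hw1 : w = ⟨1, by omega⟩ := Fin.ext (show w.val = 1 by omega)
    rw [hw1] at hw
    rw [← hMv]
    exact M.edge_vert (M.adj_symm hw)
  · rw [pathGraph_adj] at hadj
    simp only at hadj
    have hu1 : u = ⟨1, by omega⟩ := Fin.ext (show u.val = 1 by omega)
    rwa [hu1] at hu

lemma last2_mem_of_PDS (hn : 2 ≤ n) {S : Set (Fin n)}
    (h : IsPairedDomSet (pathGraph n) S) : (⟨n - 2, by omega⟩ : Fin n) ∈ S := by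
  obtain ⟨hdom, M, hMv, hMm⟩ := h
  rcases hdom ⟨n - 1, by omega⟩ with h0 | ⟨u, hu, hadj⟩
  · rw [← hMv] at h0
    obtain ⟨w, hw⟩ := (hMm h0).exists
    have hwadj := M.adj_sub hw
    rw [pathGraph_adj] at hwadj
    simp only at hwadj
    have hwlt := w.isLt
    have hw1 : w = ⟨n - 2, by omega⟩ := Fin.ext (show w.val = n - 2 by omega)
    rw [hw1] at hw
    rw [← hMv]
    exact M.edge_vert (M.adj_symm hw)
  · rw [pathGraph_adj] at hadj
    simp only at hadj
    have hult := u.isLt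
    have hu1 : u = ⟨n - 2, by omega⟩ := Fin.ext (show u.val = n - 2 by omega)
    rwa [hu1] at hu

lemma not_PDS_of_unmatchable {S : Set (Fin n)} (v : Fin n) (hv : v ∈ S)
    (h : ∀ u ∈ S, ¬ (pathGraph n).Adj v u) : ¬ IsPairedDomSet (pathGraph n) S := by
  rintro ⟨-, M, hMv, hMm⟩
  rw [← hMv] at hv
  obtain ⟨w, hw⟩ := (hMm hv).exists
  refine h w ?_ (M.adj_sub hw)
  rw [← hMv]
  exact M.edge_vert (M.adj_symm hw)

lemma not_PDS_of_undominated {S : Set (Fin n)} (v : Fin n) (hv : v ∉ S)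
    (h : ∀ u ∈ S, ¬ (pathGraph n).Adj u v) : ¬ IsPairedDomSet (pathGraph n) S := by
  rintro ⟨hdom, -⟩
  rcases hdom v with h0 | ⟨u, hu, hadj⟩
  · exact hv h0
  · exact h u hu hadj

end Aux3

section Aux4

open PCPaper

variable {V : Type*} [Fintype V] [DecidableEq V]

lemma pcNumber_eq (G : SimpleGraph V) (k : ℕ)
    (h1 : ∃ π : Finpartition (Finset.univ : Finset V), IsPCPartition G π ∧ π.parts.card = k)
    (h2 : ∀ π : Finpartition (Finset.univ : Finset V), IsPCPartition G π → π.parts.card ≤ k) :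
    pcNumber G = k := by
  apply le_antisymm
  · apply csSup_le ⟨k, h1⟩
    rintro m ⟨π, hπ, rfl⟩
    exact h2 π hπ
  · apply le_csSup ⟨k, ?_⟩ h1
    rintro m ⟨π, hπ, rfl⟩
    exact h2 π hπ

lemma ne_of_disj {A B : Finset V} (h : Disjoint A B) (hA : A.Nonempty) : A ≠ B := by
  rintro rfl
  rw [disjoint_self] at h
  rw [h] at hA
  exact absurd hA (by simp)

/-- A three-part partition of the universe. -/
def finpartOf3 (A B C : Finset V) (hAB : Disjoint A B) (hAC : Disjoint A C)
    (hBC : Disjoint B C) (hA : A.Nonempty) (hB : B.Nonempty) (hC : C.Nonempty)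
    (hcov : A ∪ B ∪ C = Finset.univ) :
    Finpartition (Finset.univ : Finset V) where
  parts := {A, B, C}
  supIndep := by
    rw [Finset.supIndep_iff_pairwiseDisjoint]
    intro x hx y hy hxy
    simp only [Finset.coe_insert, Finset.coe_singleton, Set.mem_insert_iff,
      Set.mem_singleton_iff] at hx hy
    rcases hx with rfl | rfl | rfl <;> rcases hy with rfl | rfl | rfl <;>
      first
        | exact absurd rfl hxy
        | exact hAB
        | exact hAB.symm
        | exact hAC
        | exact hAC.symm
        | exact hBC
        | exact hBC.symm
  sup_parts := by
    rw [Finset.sup_insert, Finset.sup_insert, Finset.sup_singleton]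
    rw [← hcov]
    simp only [id, Finset.sup_eq_union]
    rw [Finset.union_assoc]
  bot_notMem := by
    simp only [Finset.bot_eq_empty, Finset.mem_insert, Finset.mem_singleton]
    push_neg
    exact ⟨Ne.symm hA.ne_empty, Ne.symm hB.ne_empty, Ne.symm hC.ne_empty⟩

lemma finpartOf3_parts (A B C : Finset V) (hAB : Disjoint A B) (hAC : Disjoint A C)
    (hBC : Disjoint B C) (hA : A.Nonempty) (hB : B.Nonempty) (hC : C.Nonempty)
    (hcov : A ∪ B ∪ C = Finset.univ) :
    (finpartOf3 A B C hAB hAC hBC hA hB hC hcov).parts = {A, B, C} := rfl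

lemma card3 (A B C : Finset V) (hAB : Disjoint A B) (hAC : Disjoint A C)
    (hBC : Disjoint B C) (hA : A.Nonempty) (hB : B.Nonempty) :
    ({A, B, C} : Finset (Finset V)).card = 3 := by
  rw [Finset.card_insert_of_notMem, Finset.card_insert_of_notMem, Finset.card_singleton]
  · simp only [Finset.mem_singleton]
    exact ne_of_disj hBC hB
  · simp only [Finset.mem_insert, Finset.mem_singleton]
    push_neg
    exact ⟨ne_of_disj hAB hA, ne_of_disj hAC hA⟩

/-- A two-part partition of the universe. -/
def finpartOf2 (A B : Finset V) (hAB : Disjoint A B) (hA : A.Nonempty) (hB : B.Nonempty)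
    (hcov : A ∪ B = Finset.univ) :
    Finpartition (Finset.univ : Finset V) where
  parts := {A, B}
  supIndep := by
    rw [Finset.supIndep_iff_pairwiseDisjoint]
    intro x hx y hy hxy
    simp only [Finset.coe_insert, Finset.coe_singleton, Set.mem_insert_iff,
      Set.mem_singleton_iff] at hx hy
    rcases hx with rfl | rfl <;> rcases hy with rfl | rfl <;>
      first
        | exact absurd rfl hxy
        | exact hAB
        | exact hAB.symm
  sup_parts := by
    rw [Finset.sup_insert, Finset.sup_singleton]
    rw [← hcov]
    simp only [id, Finset.sup_eq_union]
  bot_notMem := by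
    simp only [Finset.bot_eq_empty, Finset.mem_insert, Finset.mem_singleton]
    push_neg
    exact ⟨Ne.symm hA.ne_empty, Ne.symm hB.ne_empty⟩

lemma finpartOf2_parts (A B : Finset V) (hAB : Disjoint A B) (hA : A.Nonempty)
    (hB : B.Nonempty) (hcov : A ∪ B = Finset.univ) :
    (finpartOf2 A B hAB hA hB hcov).parts = {A, B} := rfl

lemma card2 (A B : Finset V) (hAB : Disjoint A B) (hA : A.Nonempty) :
    ({A, B} : Finset (Finset V)).card = 2 := by
  rw [Finset.card_insert_of_notMem, Finset.card_singleton]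
  simp only [Finset.mem_singleton]
  exact ne_of_disj hAB hA

end Aux4


section UB

open PCPaper SimpleGraph

variable {n : ℕ}

lemma parts_le_three (hn : 2 ≤ n) (π : Finpartition (Finset.univ : Finset (Fin n)))
    (hπ : IsPCPartition (pathGraph n) π) : π.parts.card ≤ 3 := by
  by_contra hcard
  push_neg at hcard
  set v1 : Fin n := ⟨1, by omega⟩ with hv1def
  obtain ⟨P, hP, hv1P⟩ := π.exists_mem (Finset.mem_univ v1)
  have hc1 : 3 ≤ (π.parts.erase P).card := by
    rw [Finset.card_erase_of_mem hP]; omega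
  obtain ⟨A, hA⟩ := Finset.card_pos.mp (by omega : 0 < (π.parts.erase P).card)
  have hc2 : 2 ≤ ((π.parts.erase P).erase A).card := by
    rw [Finset.card_erase_of_mem hA]; omega
  obtain ⟨B, hB⟩ := Finset.card_pos.mp (by omega : 0 < ((π.parts.erase P).erase A).card)
  have hc3 : 1 ≤ (((π.parts.erase P).erase A).erase B).card := by
    rw [Finset.card_erase_of_mem hB]; omega
  obtain ⟨C, hC⟩ :=
    Finset.card_pos.mp (by omega : 0 < (((π.parts.erase P).erase A).erase B).card)
  rw [Finset.mem_erase] at hA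
  rw [Finset.mem_erase, Finset.mem_erase] at hB
  rw [Finset.mem_erase, Finset.mem_erase, Finset.mem_erase] at hC
  obtain ⟨hAP, hAmem⟩ := hA
  obtain ⟨hBA, hBP, hBmem⟩ := hB
  obtain ⟨hCB, hCA, hCP, hCmem⟩ := hC
  have hdisj : ∀ X ∈ π.parts, ∀ Y ∈ π.parts, X ≠ Y → Disjoint X Y := by
    intro X hX Y hY hXY
    exact π.disjoint (Finset.mem_coe.mpr hX) (Finset.mem_coe.mpr hY) hXY
  have partner : ∀ X ∈ π.parts, X ≠ P →
      IsPairedDomSet (pathGraph n) ((X : Set (Fin n)) ∪ (P : Set (Fin n))) := by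
    intro X hX hXP
    obtain ⟨-, D, hD, hDX, hdisjXD, -, -, hPDS⟩ := hπ X hX
    have hv1mem := one_mem_of_PDS hn hPDS
    have hv1X : v1 ∉ X := by
      intro hmem
      exact (Finset.disjoint_left.mp (hdisj X hX P hP hXP) hmem) hv1P
    have hv1D : v1 ∈ D := by
      rcases hv1mem with h | h
      · exact absurd (Finset.mem_coe.mp h) hv1X
      · exact Finset.mem_coe.mp h
    have hDP : D = P := by
      by_contra hne
      exact (Finset.disjoint_left.mp (hdisj D hD P hP hne) hv1D) hv1P
    rwa [hDP] at hPDS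
  have hPnot : ¬ IsPairedDomSet (pathGraph n) (P : Set (Fin n)) := (hπ P hP).1
  have pigeon : ∀ x y : ℕ,
      (∀ X, X ∈ π.parts → X ≠ P → ∃ u ∈ X, u.val = x ∨ u.val = y) → False := by
    intro x y hhit
    obtain ⟨a, haA, ha⟩ := hhit A hAmem hAP
    obtain ⟨b, hbB, hb⟩ := hhit B hBmem hBP
    obtain ⟨c, hcC, hc⟩ := hhit C hCmem hCP
    have hab : a.val ≠ b.val := by
      intro h
      have h2 : a = b := Fin.ext h
      subst h2
      exact (Finset.disjoint_left.mp (hdisj A hAmem B hBmem (Ne.symm hBA)) haA) hbB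
    have hac : a.val ≠ c.val := by
      intro h
      have h2 : a = c := Fin.ext h
      subst h2
      exact (Finset.disjoint_left.mp (hdisj A hAmem C hCmem (Ne.symm hCA)) haA) hcC
    have hbc : b.val ≠ c.val := by
      intro h
      have h2 : b = c := Fin.ext h
      subst h2
      exact (Finset.disjoint_left.mp (hdisj B hBmem C hCmem (Ne.symm hCB)) hbB) hcC
    omega
  by_cases hdom : IsDomSet (pathGraph n) (P : Set (Fin n))
  · -- P dominating, hence no perfect matching; find odd run
    have hnoM : ¬ ∀ v, inS (P : Set (Fin n)) v → ¬ inS (P : Set (Fin n)) (v+1) →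
        Even (runLen (P : Set (Fin n)) v) := by
      intro hh
      exact hPnot ⟨hdom, matching_of_even_runs _ hh⟩
    push_neg at hnoM
    obtain ⟨e, hein, hnein, hnodd⟩ := hnoM
    rw [Nat.not_even_iff] at hnodd
    set d := runLen (P : Set (Fin n)) e with hd
    have hd1 : 1 ≤ d := by omega
    have hdle : d ≤ e + 1 := runLen_le e
    set s := e + 1 - d with hs
    have hrange : ∀ k, s ≤ k → k ≤ e → inS (P : Set (Fin n)) k := by
      intro k h1 h2
      have heq : k = e - (e - k) := by omega
      rw [heq]
      exact mem_of_lt_runLen e (e - k) (by omega)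
    have hleft : s = 0 ∨ ¬ inS (P : Set (Fin n)) (s - 1) := by
      rcases Nat.lt_or_ge e d with h | h
      · left; omega
      · right
        have hnm := not_mem_sub_runLen (S := (P : Set (Fin n))) e (by omega)
        have heq : s - 1 = e - d := by omega
        rwa [heq]
    apply pigeon (s - 1) (e + 1)
    intro X hX hXP
    obtain ⟨-, M, hMv, hMm⟩ := partner X hX hXP
    by_cases hr : inS M.verts (e+1)
    · obtain ⟨hlt, hmem⟩ := hr
      rw [hMv] at hmem
      have hXmem : (⟨e+1, hlt⟩ : Fin n) ∈ X := by
        rcases hmem with h | h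
        · exact Finset.mem_coe.mp h
        · exact absurd (inS_of_mem h) hnein
      exact ⟨_, hXmem, Or.inr rfl⟩
    · by_cases hl : 1 ≤ s ∧ inS M.verts (s-1)
      · obtain ⟨hs1, hlt, hmem⟩ := hl
        rw [hMv] at hmem
        have hXmem : (⟨s-1, hlt⟩ : Fin n) ∈ X := by
          rcases hmem with h | h
          · exact Finset.mem_coe.mp h
          · exfalso
            rcases hleft with h0 | hnot
            · omega
            · exact hnot (inS_of_mem h)
        exact ⟨_, hXmem, Or.inl rfl⟩
      · exfalso
        have hrange' : ∀ k, s ≤ k → k ≤ e → inS M.verts k := by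
          intro k h1 h2
          obtain ⟨hlt, hmem⟩ := hrange k h1 h2
          exact ⟨hlt, by rw [hMv]; exact Or.inr hmem⟩
        have hleft' : s = 0 ∨ ¬ inS M.verts (s-1) := by
          rcases Nat.eq_zero_or_pos s with h0 | hpos
          · exact Or.inl h0
          · right; intro hmem; exact hl ⟨hpos, hmem⟩
        obtain ⟨m, hm2⟩ := run_odd hMm (by omega : s ≤ e) hrange' hleft' hr
        omega
  · -- P not dominating
    unfold IsDomSet at hdom
    push_neg at hdom
    obtain ⟨w, hw1, hw2⟩ := hdom
    apply pigeon (w.val - 1) (w.val + 1)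
    intro X hX hXP
    obtain ⟨hdomU, M, hMv, hMm⟩ := partner X hX hXP
    by_cases hwX : w ∈ X
    · have hwin : w ∈ M.verts := by
        rw [hMv]; exact Or.inl (Finset.mem_coe.mpr hwX)
      obtain ⟨u, hu⟩ := (hMm hwin).exists
      have huadj := M.adj_sub hu
      have huX : u ∈ X := by
        have hmem : u ∈ M.verts := M.edge_vert (M.adj_symm hu)
        rw [hMv] at hmem
        rcases hmem with h | h
        · exact Finset.mem_coe.mp h
        · exact absurd huadj.symm (hw2 u h)
      refine ⟨u, huX, ?_⟩
      rw [pathGraph_adj] at huadj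
      omega
    · rcases hdomU w with h | ⟨u, hu, hadj⟩
      · rcases h with h | h
        · exact absurd (Finset.mem_coe.mp h) hwX
        · exact absurd h hw1
      · have huX : u ∈ X := by
          rcases hu with h | h
          · exact Finset.mem_coe.mp h
          · exact absurd hadj (hw2 u h)
        refine ⟨u, huX, ?_⟩
        rw [pathGraph_adj] at hadj
        omega

end UB


section PDS

open PCPaper SimpleGraph

variable {n : ℕ}

lemma inS_setOf (p : ℕ → Prop) (k : ℕ) :
    inS {v : Fin n | p v.val} k ↔ (k < n ∧ p k) := by
  constructor
  · rintro ⟨h, hm⟩; exact ⟨h, hm⟩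
  · rintro ⟨h, hm⟩; exact ⟨h, hm⟩

lemma PDS_univ_even (hn : 2 ≤ n) (he : n % 2 = 0) :
    IsPairedDomSet (pathGraph n) {v : Fin n | True} := by
  constructor
  · intro v; exact Or.inl trivial
  · apply matching_of_g _ (fun k => if k % 2 = 0 then k + 1 else k - 1)
    intro k hk
    rw [inS_setOf (fun _ => True)] at hk
    simp only [inS_setOf (fun _ => True)]
    split_ifs <;> exact ⟨⟨by omega, trivial⟩, by omega, by omega⟩

lemma PDS_ne0 (hn : 3 ≤ n) (ho : n % 2 = 1) :
    IsPairedDomSet (pathGraph n) {v : Fin n | v.val ≠ 0} := by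
  constructor
  · intro v
    by_cases h : v.val = 0
    · right
      refine ⟨⟨1, by omega⟩, ?_, ?_⟩
      · show (1:ℕ) ≠ 0; omega
      · rw [pathGraph_adj]; right; show v.val + 1 = 1; omega
    · exact Or.inl h
  · apply matching_of_g _ (fun k => if k % 2 = 1 then k + 1 else k - 1)
    intro k hk
    rw [inS_setOf (fun x => x ≠ 0)] at hk
    simp only [inS_setOf (fun x => x ≠ 0)]
    split_ifs <;> omega

lemma PDS_ne2 (hn : 3 ≤ n) (ho : n % 2 = 1) :
    IsPairedDomSet (pathGraph n) {v : Fin n | v.val ≠ 2} := by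
  constructor
  · intro v
    by_cases h : v.val = 2
    · right
      refine ⟨⟨1, by omega⟩, ?_, ?_⟩
      · show (1:ℕ) ≠ 2; omega
      · rw [pathGraph_adj]; left; show 1 + 1 = v.val; omega
    · exact Or.inl h
  · apply matching_of_g _
      (fun k => if k ≤ 1 then 1 - k else if k % 2 = 1 then k + 1 else k - 1)
    intro k hk
    rw [inS_setOf (fun x => x ≠ 2)] at hk
    simp only [inS_setOf (fun x => x ≠ 2)]
    split_ifs <;> omega

lemma PDS_ne03 (hn : 6 ≤ n) (he : n % 2 = 0) :
    IsPairedDomSet (pathGraph n) {v : Fin n | v.val ≠ 0 ∧ v.val ≠ 3} := by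
  constructor
  · intro v
    by_cases h0 : v.val = 0
    · right
      refine ⟨⟨1, by omega⟩, ?_, ?_⟩
      · show (1:ℕ) ≠ 0 ∧ (1:ℕ) ≠ 3; omega
      · rw [pathGraph_adj]; right; show v.val + 1 = 1; omega
    · by_cases h3 : v.val = 3
      · right
        refine ⟨⟨2, by omega⟩, ?_, ?_⟩
        · show (2:ℕ) ≠ 0 ∧ (2:ℕ) ≠ 3; omega
        · rw [pathGraph_adj]; left; show 2 + 1 = v.val; omega
      · exact Or.inl ⟨h0, h3⟩
  · apply matching_of_g _
      (fun k => if k ≤ 2 then 3 - k else if k % 2 = 0 then k + 1 else k - 1)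
    intro k hk
    rw [inS_setOf (fun x => x ≠ 0 ∧ x ≠ 3)] at hk
    simp only [inS_setOf (fun x => x ≠ 0 ∧ x ≠ 3)]
    split_ifs <;> omega

lemma PDS_ne25 (hn : 6 ≤ n) (he : n % 2 = 0) :
    IsPairedDomSet (pathGraph n) {v : Fin n | v.val ≠ 2 ∧ v.val ≠ 5} := by
  constructor
  · intro v
    by_cases h0 : v.val = 2
    · right
      refine ⟨⟨1, by omega⟩, ?_, ?_⟩
      · show (1:ℕ) ≠ 2 ∧ (1:ℕ) ≠ 5; omega
      · rw [pathGraph_adj]; left; show 1 + 1 = v.val; omega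
    · by_cases h3 : v.val = 5
      · right
        refine ⟨⟨4, by omega⟩, ?_, ?_⟩
        · show (4:ℕ) ≠ 2 ∧ (4:ℕ) ≠ 5; omega
        · rw [pathGraph_adj]; left; show 4 + 1 = v.val; omega
      · exact Or.inl ⟨h0, h3⟩
  · apply matching_of_g _
      (fun k => if k ≤ 1 then 1 - k else if k ≤ 4 then 7 - k
        else if k % 2 = 0 then k + 1 else k - 1)
    intro k hk
    rw [inS_setOf (fun x => x ≠ 2 ∧ x ≠ 5)] at hk
    simp only [inS_setOf (fun x => x ≠ 2 ∧ x ≠ 5)]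
    split_ifs <;> omega

lemma PDS_12four :
    IsPairedDomSet (pathGraph 4) {v : Fin 4 | v.val = 1 ∨ v.val = 2} := by
  constructor
  · intro v
    have hv := v.isLt
    by_cases h0 : v.val = 0
    · right
      refine ⟨⟨1, by omega⟩, ?_, ?_⟩
      · show (1:ℕ) = 1 ∨ (1:ℕ) = 2; omega
      · rw [pathGraph_adj]; right; show v.val + 1 = 1; omega
    · by_cases h3 : v.val = 3
      · right
        refine ⟨⟨2, by omega⟩, ?_, ?_⟩
        · show (2:ℕ) = 1 ∨ (2:ℕ) = 2; omega
        · rw [pathGraph_adj]; left; show 2 + 1 = v.val; omega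
      · exact Or.inl (by show v.val = 1 ∨ v.val = 2; omega)
  · apply matching_of_g _ (fun k => 3 - k)
    intro k hk
    rw [inS_setOf (fun x => x = 1 ∨ x = 2)] at hk
    simp only [inS_setOf (fun x => x = 1 ∨ x = 2)]
    omega

end PDS


section NotPDS

open PCPaper SimpleGraph

variable {n : ℕ}

lemma not_PDS_val (p : ℕ → Prop) (a : ℕ) (ha : a < n) (hpa : p a)
    (h : ∀ b, b < n → p b → ¬(a + 1 = b ∨ b + 1 = a)) :
    ¬ IsPairedDomSet (pathGraph n) {v : Fin n | p v.val} :=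
  not_PDS_of_unmatchable ⟨a, ha⟩ hpa (fun u hu hadj =>
    h u.val u.isLt hu (by rw [pathGraph_adj] at hadj; exact hadj))

lemma not_PDS_undom_val (p : ℕ → Prop) (a : ℕ) (ha : a < n) (hpa : ¬ p a)
    (h : ∀ b, b < n → p b → ¬(b + 1 = a ∨ a + 1 = b)) :
    ¬ IsPairedDomSet (pathGraph n) {v : Fin n | p v.val} :=
  not_PDS_of_undominated ⟨a, ha⟩ hpa (fun u hu hadj =>
    h u.val u.isLt hu (by rw [pathGraph_adj] at hadj; exact hadj))

lemma coe_filter_univ (p : Fin n → Prop) [DecidablePred p] :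
    ((Finset.univ.filter p : Finset (Fin n)) : Set (Fin n)) = {v : Fin n | p v} := by
  ext v; simp

end NotPDS

section Lower

open PCPaper SimpleGraph

variable {n : ℕ}

lemma lower_n2 : ∃ π : Finpartition (Finset.univ : Finset (Fin 2)),
    IsPCPartition (pathGraph 2) π ∧ π.parts.card = 2 := by
  classical
  set A : Finset (Fin 2) := Finset.univ.filter (fun v => v.val = 0) with hA
  set B : Finset (Fin 2) := Finset.univ.filter (fun v => v.val = 1) with hB
  have hABd : Disjoint A B := by
    rw [Finset.disjoint_left]; intro a ha hb; simp [hA, hB] at ha hb; omega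
  have hAne : A.Nonempty := ⟨⟨0, by omega⟩, by simp [hA]⟩
  have hBne : B.Nonempty := ⟨⟨1, by omega⟩, by simp [hB]⟩
  have hcov : A ∪ B = Finset.univ := by
    ext v; simp [hA, hB]; omega
  have hcoeA : (A : Set (Fin 2)) = {v : Fin 2 | v.val = 0} := by
    rw [hA, coe_filter_univ]
  have hcoeB : (B : Set (Fin 2)) = {v : Fin 2 | v.val = 1} := by
    rw [hB, coe_filter_univ]
  have hunion : ((A : Set (Fin 2)) ∪ (B : Set (Fin 2))) = {v : Fin 2 | True} := by
    rw [hcoeA, hcoeB]; ext v; simp; omega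
  have hnotA : ¬ IsPairedDomSet (pathGraph 2) (A : Set (Fin 2)) := by
    rw [hcoeA]
    refine not_PDS_val (fun x => x = 0) 0 ?_ ?_ ?_
    · omega
    · exact rfl
    · intro b hb hpb; omega
  have hnotB : ¬ IsPairedDomSet (pathGraph 2) (B : Set (Fin 2)) := by
    rw [hcoeB]
    refine not_PDS_val (fun x => x = 1) 1 ?_ ?_ ?_
    · omega
    · exact rfl
    · intro b hb hpb; omega
  have hPDS : IsPairedDomSet (pathGraph 2) ((A : Set (Fin 2)) ∪ (B : Set (Fin 2))) := by
    rw [hunion]; exact PDS_univ_even (by omega) (by omega)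
  refine ⟨finpartOf2 A B hABd hAne hBne hcov, ?_, ?_⟩
  · intro X hX
    rw [finpartOf2_parts] at hX
    simp only [Finset.mem_insert, Finset.mem_singleton] at hX
    rcases hX with rfl | rfl
    · refine ⟨hnotA, B, by simp [finpartOf2_parts], ne_of_disj hABd.symm hBne, ?_⟩
      exact ⟨Finset.disjoint_coe.mpr hABd, hnotA, hnotB, hPDS⟩
    · refine ⟨hnotB, A, by simp [finpartOf2_parts], ne_of_disj hABd hAne, ?_⟩
      refine ⟨(Finset.disjoint_coe.mpr hABd).symm, hnotB, hnotA, ?_⟩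
      rwa [Set.union_comm]
  · exact card2 A B hABd hAne

lemma lower_n4 : ∃ π : Finpartition (Finset.univ : Finset (Fin 4)),
    IsPCPartition (pathGraph 4) π ∧ π.parts.card = 2 := by
  classical
  set A : Finset (Fin 4) := Finset.univ.filter (fun v => v.val ≤ 1) with hA
  set B : Finset (Fin 4) := Finset.univ.filter (fun v => 2 ≤ v.val) with hB
  have hABd : Disjoint A B := by
    rw [Finset.disjoint_left]; intro a ha hb; simp [hA, hB] at ha hb; omega
  have hAne : A.Nonempty := ⟨⟨0, by omega⟩, by simp [hA]⟩
  have hBne : B.Nonempty := ⟨⟨2, by omega⟩, by simp [hB]⟩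
  have hcov : A ∪ B = Finset.univ := by
    ext v; simp [hA, hB]; omega
  have hcoeA : (A : Set (Fin 4)) = {v : Fin 4 | v.val ≤ 1} := by
    rw [hA, coe_filter_univ]
  have hcoeB : (B : Set (Fin 4)) = {v : Fin 4 | 2 ≤ v.val} := by
    rw [hB, coe_filter_univ]
  have hunion : ((A : Set (Fin 4)) ∪ (B : Set (Fin 4))) = {v : Fin 4 | True} := by
    rw [hcoeA, hcoeB]; ext v; simp; omega
  have hnotA : ¬ IsPairedDomSet (pathGraph 4) (A : Set (Fin 4)) := by
    rw [hcoeA]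
    refine not_PDS_undom_val (fun x => x ≤ 1) 3 ?_ ?_ ?_
    · omega
    · omega
    · intro b hb hpb; omega
  have hnotB : ¬ IsPairedDomSet (pathGraph 4) (B : Set (Fin 4)) := by
    rw [hcoeB]
    refine not_PDS_undom_val (fun x => 2 ≤ x) 0 ?_ ?_ ?_
    · omega
    · omega
    · intro b hb hpb; omega
  have hPDS : IsPairedDomSet (pathGraph 4) ((A : Set (Fin 4)) ∪ (B : Set (Fin 4))) := by
    rw [hunion]; exact PDS_univ_even (by omega) (by omega)
  refine ⟨finpartOf2 A B hABd hAne hBne hcov, ?_, ?_⟩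
  · intro X hX
    rw [finpartOf2_parts] at hX
    simp only [Finset.mem_insert, Finset.mem_singleton] at hX
    rcases hX with rfl | rfl
    · refine ⟨hnotA, B, by simp [finpartOf2_parts], ne_of_disj hABd.symm hBne, ?_⟩
      exact ⟨Finset.disjoint_coe.mpr hABd, hnotA, hnotB, hPDS⟩
    · refine ⟨hnotB, A, by simp [finpartOf2_parts], ne_of_disj hABd hAne, ?_⟩
      refine ⟨(Finset.disjoint_coe.mpr hABd).symm, hnotB, hnotA, ?_⟩
      rwa [Set.union_comm]
  · exact card2 A B hABd hAne

lemma lower_odd (hn : 3 ≤ n) (ho : n % 2 = 1) :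
    ∃ π : Finpartition (Finset.univ : Finset (Fin n)),
      IsPCPartition (pathGraph n) π ∧ π.parts.card = 3 := by
  classical
  set A : Finset (Fin n) := Finset.univ.filter (fun v => v.val = 0) with hA
  set B : Finset (Fin n) := Finset.univ.filter (fun v => v.val = 2) with hB
  set C : Finset (Fin n) := Finset.univ.filter (fun v => v.val ≠ 0 ∧ v.val ≠ 2) with hC
  have hABd : Disjoint A B := by
    rw [Finset.disjoint_left]; intro a ha hb; simp [hA, hB] at ha hb; omega
  have hACd : Disjoint A C := by
    rw [Finset.disjoint_left]; intro a ha hb; simp [hA, hC] at ha hb; omega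
  have hBCd : Disjoint B C := by
    rw [Finset.disjoint_left]; intro a ha hb; simp [hB, hC] at ha hb; omega
  have hAne : A.Nonempty := ⟨⟨0, by omega⟩, by simp [hA]⟩
  have hBne : B.Nonempty := ⟨⟨2, by omega⟩, by simp [hB]⟩
  have hCne : C.Nonempty := ⟨⟨1, by omega⟩, by simp [hC]⟩
  have hcov : A ∪ B ∪ C = Finset.univ := by
    ext v; simp [hA, hB, hC]; omega
  have hcoeA : (A : Set (Fin n)) = {v : Fin n | v.val = 0} := by
    rw [hA, coe_filter_univ]
  have hcoeB : (B : Set (Fin n)) = {v : Fin n | v.val = 2} := by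
    rw [hB, coe_filter_univ]
  have hcoeC : (C : Set (Fin n)) = {v : Fin n | v.val ≠ 0 ∧ v.val ≠ 2} := by
    rw [hC, coe_filter_univ]
  have hAC : ((A : Set (Fin n)) ∪ (C : Set (Fin n))) = {v : Fin n | v.val ≠ 2} := by
    rw [hcoeA, hcoeC]; ext v; simp; omega
  have hBC : ((B : Set (Fin n)) ∪ (C : Set (Fin n))) = {v : Fin n | v.val ≠ 0} := by
    rw [hcoeB, hcoeC]; ext v; simp; omega
  have hnotA : ¬ IsPairedDomSet (pathGraph n) (A : Set (Fin n)) := by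
    rw [hcoeA]
    refine not_PDS_val (fun x => x = 0) 0 ?_ ?_ ?_
    · omega
    · exact rfl
    · intro b hb hpb; omega
  have hnotB : ¬ IsPairedDomSet (pathGraph n) (B : Set (Fin n)) := by
    rw [hcoeB]
    refine not_PDS_val (fun x => x = 2) 2 ?_ ?_ ?_
    · omega
    · exact rfl
    · intro b hb hpb; omega
  have hnotC : ¬ IsPairedDomSet (pathGraph n) (C : Set (Fin n)) := by
    rw [hcoeC]
    refine not_PDS_val (fun x => x ≠ 0 ∧ x ≠ 2) 1 ?_ ?_ ?_
    · omega
    · omega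
    · intro b hb hpb; omega
  have hPDSAC : IsPairedDomSet (pathGraph n) ((A : Set (Fin n)) ∪ (C : Set (Fin n))) := by
    rw [hAC]; exact PDS_ne2 hn ho
  have hPDSBC : IsPairedDomSet (pathGraph n) ((B : Set (Fin n)) ∪ (C : Set (Fin n))) := by
    rw [hBC]; exact PDS_ne0 hn ho
  refine ⟨finpartOf3 A B C hABd hACd hBCd hAne hBne hCne hcov, ?_, ?_⟩
  · intro X hX
    rw [finpartOf3_parts] at hX
    simp only [Finset.mem_insert, Finset.mem_singleton] at hX
    rcases hX with rfl | rfl | rfl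
    · refine ⟨hnotA, C, by simp [finpartOf3_parts], ne_of_disj hACd.symm hCne, ?_⟩
      exact ⟨Finset.disjoint_coe.mpr hACd, hnotA, hnotC, hPDSAC⟩
    · refine ⟨hnotB, C, by simp [finpartOf3_parts], ne_of_disj hBCd.symm hCne, ?_⟩
      exact ⟨Finset.disjoint_coe.mpr hBCd, hnotB, hnotC, hPDSBC⟩
    · refine ⟨hnotC, A, by simp [finpartOf3_parts], ne_of_disj hACd hAne, ?_⟩
      refine ⟨(Finset.disjoint_coe.mpr hACd).symm, hnotC, hnotA, ?_⟩
      rwa [Set.union_comm]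
  · exact card3 A B C hABd hACd hBCd hAne hBne

lemma lower_even (hn : 6 ≤ n) (he : n % 2 = 0) :
    ∃ π : Finpartition (Finset.univ : Finset (Fin n)),
      IsPCPartition (pathGraph n) π ∧ π.parts.card = 3 := by
  classical
  set A : Finset (Fin n) := Finset.univ.filter (fun v => v.val = 0 ∨ v.val = 3) with hA
  set B : Finset (Fin n) := Finset.univ.filter (fun v => v.val = 2 ∨ v.val = 5) with hB
  set C : Finset (Fin n) := Finset.univ.filter
    (fun v => v.val ≠ 0 ∧ v.val ≠ 3 ∧ v.val ≠ 2 ∧ v.val ≠ 5) with hC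
  have hABd : Disjoint A B := by
    rw [Finset.disjoint_left]; intro a ha hb; simp [hA, hB] at ha hb; omega
  have hACd : Disjoint A C := by
    rw [Finset.disjoint_left]; intro a ha hb; simp [hA, hC] at ha hb; omega
  have hBCd : Disjoint B C := by
    rw [Finset.disjoint_left]; intro a ha hb; simp [hB, hC] at ha hb; omega
  have hAne : A.Nonempty := ⟨⟨0, by omega⟩, by simp [hA]⟩
  have hBne : B.Nonempty := ⟨⟨2, by omega⟩, by simp [hB]⟩
  have hCne : C.Nonempty := ⟨⟨1, by omega⟩, by simp [hC]⟩
  have hcov : A ∪ B ∪ C = Finset.univ := by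
    ext v; simp [hA, hB, hC]; omega
  have hcoeA : (A : Set (Fin n)) = {v : Fin n | v.val = 0 ∨ v.val = 3} := by
    rw [hA, coe_filter_univ]
  have hcoeB : (B : Set (Fin n)) = {v : Fin n | v.val = 2 ∨ v.val = 5} := by
    rw [hB, coe_filter_univ]
  have hcoeC : (C : Set (Fin n)) =
      {v : Fin n | v.val ≠ 0 ∧ v.val ≠ 3 ∧ v.val ≠ 2 ∧ v.val ≠ 5} := by
    rw [hC, coe_filter_univ]
  have hAC : ((A : Set (Fin n)) ∪ (C : Set (Fin n))) =
      {v : Fin n | v.val ≠ 2 ∧ v.val ≠ 5} := by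
    rw [hcoeA, hcoeC]; ext v; simp; omega
  have hBC : ((B : Set (Fin n)) ∪ (C : Set (Fin n))) =
      {v : Fin n | v.val ≠ 0 ∧ v.val ≠ 3} := by
    rw [hcoeB, hcoeC]; ext v; simp; omega
  have hnotA : ¬ IsPairedDomSet (pathGraph n) (A : Set (Fin n)) := by
    rw [hcoeA]
    refine not_PDS_val (fun x => x = 0 ∨ x = 3) 0 ?_ ?_ ?_
    · omega
    · omega
    · intro b hb hpb; omega
  have hnotB : ¬ IsPairedDomSet (pathGraph n) (B : Set (Fin n)) := by
    rw [hcoeB]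
    refine not_PDS_val (fun x => x = 2 ∨ x = 5) 2 ?_ ?_ ?_
    · omega
    · omega
    · intro b hb hpb; omega
  have hnotC : ¬ IsPairedDomSet (pathGraph n) (C : Set (Fin n)) := by
    rw [hcoeC]
    refine not_PDS_val (fun x => x ≠ 0 ∧ x ≠ 3 ∧ x ≠ 2 ∧ x ≠ 5) 1 ?_ ?_ ?_
    · omega
    · omega
    · intro b hb hpb; omega
  have hPDSAC : IsPairedDomSet (pathGraph n) ((A : Set (Fin n)) ∪ (C : Set (Fin n))) := by
    rw [hAC]; exact PDS_ne25 hn he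
  have hPDSBC : IsPairedDomSet (pathGraph n) ((B : Set (Fin n)) ∪ (C : Set (Fin n))) := by
    rw [hBC]; exact PDS_ne03 hn he
  refine ⟨finpartOf3 A B C hABd hACd hBCd hAne hBne hCne hcov, ?_, ?_⟩
  · intro X hX
    rw [finpartOf3_parts] at hX
    simp only [Finset.mem_insert, Finset.mem_singleton] at hX
    rcases hX with rfl | rfl | rfl
    · refine ⟨hnotA, C, by simp [finpartOf3_parts], ne_of_disj hACd.symm hCne, ?_⟩
      exact ⟨Finset.disjoint_coe.mpr hACd, hnotA, hnotC, hPDSAC⟩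
    · refine ⟨hnotB, C, by simp [finpartOf3_parts], ne_of_disj hBCd.symm hCne, ?_⟩
      exact ⟨Finset.disjoint_coe.mpr hBCd, hnotB, hnotC, hPDSBC⟩
    · refine ⟨hnotC, A, by simp [finpartOf3_parts], ne_of_disj hACd hAne, ?_⟩
      refine ⟨(Finset.disjoint_coe.mpr hACd).symm, hnotC, hnotA, ?_⟩
      rwa [Set.union_comm]
  · exact card3 A B C hABd hACd hBCd hAne hBne

end Lower


section FourUB

open PCPaper SimpleGraph

lemma parts_le_two_four (π : Finpartition (Finset.univ : Finset (Fin 4)))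
    (hπ : IsPCPartition (pathGraph 4) π) : π.parts.card ≤ 2 := by
  by_contra hcard
  push_neg at hcard
  have hv1lt : (1:ℕ) < 4 := by omega
  have hv2lt : (2:ℕ) < 4 := by omega
  set v1 : Fin 4 := ⟨1, hv1lt⟩ with hv1def
  set v2 : Fin 4 := ⟨2, hv2lt⟩ with hv2def
  obtain ⟨P, hP, hv1P⟩ := π.exists_mem (Finset.mem_univ v1)
  obtain ⟨Q, hQ, hv2Q⟩ := π.exists_mem (Finset.mem_univ v2)
  have hdisj : ∀ X ∈ π.parts, ∀ Y ∈ π.parts, X ≠ Y → Disjoint X Y := fun X hX Y hY hXY =>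
    π.disjoint (Finset.mem_coe.mpr hX) (Finset.mem_coe.mpr hY) hXY
  by_cases hPQ : P = Q
  · -- v1, v2 ∈ P, and P has at most 2 elements, so P = {v1, v2}, which is a PDS
    have hv2P : v2 ∈ P := hPQ ▸ hv2Q
    have hc1 : 2 ≤ (π.parts.erase P).card := by
      rw [Finset.card_erase_of_mem hP]; omega
    obtain ⟨A, hA⟩ := Finset.card_pos.mp (by omega : 0 < (π.parts.erase P).card)
    have hc2 : 1 ≤ ((π.parts.erase P).erase A).card := by
      rw [Finset.card_erase_of_mem hA]; omega
    obtain ⟨B, hB⟩ :=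
      Finset.card_pos.mp (by omega : 0 < ((π.parts.erase P).erase A).card)
    rw [Finset.mem_erase] at hA
    rw [Finset.mem_erase, Finset.mem_erase] at hB
    obtain ⟨hAP, hAmem⟩ := hA
    obtain ⟨hBA, hBP, hBmem⟩ := hB
    have hPA : P ≠ A := Ne.symm hAP
    have hPB : P ≠ B := Ne.symm hBP
    have hABne : A ≠ B := Ne.symm hBA
    have hsub : ({P, A, B} : Finset (Finset (Fin 4))) ⊆ π.parts := by
      intro x hx
      simp only [Finset.mem_insert, Finset.mem_singleton] at hx
      rcases hx with rfl | rfl | rfl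
      · exact hP
      · exact hAmem
      · exact hBmem
    have hsum3 : P.card + (A.card + B.card) ≤ 4 := by
      calc P.card + (A.card + B.card)
          = ∑ i ∈ ({P, A, B} : Finset (Finset (Fin 4))), i.card := by
            rw [Finset.sum_insert (by simp [hPA, hPB]),
              Finset.sum_insert (by simp [hABne]), Finset.sum_singleton]
        _ ≤ ∑ i ∈ π.parts, i.card := Finset.sum_le_sum_of_subset hsub
        _ = 4 := by rw [π.sum_card_parts]; simp
    have hAcard : 1 ≤ A.card := Finset.card_pos.mpr (π.nonempty_of_mem_parts hAmem)
    have hBcard : 1 ≤ B.card := Finset.card_pos.mpr (π.nonempty_of_mem_parts hBmem)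
    have hsubP : ({v1, v2} : Finset (Fin 4)) ⊆ P := by
      intro x hx
      simp only [Finset.mem_insert, Finset.mem_singleton] at hx
      rcases hx with rfl | rfl
      · exact hv1P
      · exact hv2P
    have hc12 : ({v1, v2} : Finset (Fin 4)).card = 2 := by
      rw [Finset.card_insert_of_notMem (by
        simp only [Finset.mem_singleton, hv1def, hv2def, Fin.mk.injEq]
        omega), Finset.card_singleton]
    have hPeq : P = {v1, v2} := (Finset.eq_of_subset_of_card_le hsubP (by omega)).symm
    apply (hπ P hP).1
    rw [hPeq]
    have hco : (({v1, v2} : Finset (Fin 4)) : Set (Fin 4)) =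
        {v : Fin 4 | v.val = 1 ∨ v.val = 2} := by
      ext v
      simp only [Finset.coe_insert, Finset.coe_singleton, Set.mem_insert_iff,
        Set.mem_singleton_iff, Set.mem_setOf_eq, hv1def, hv2def, Fin.ext_iff]
    rw [hco]
    exact PDS_12four
  · -- some part A differs from P and Q; its partner must contain v1 and v2
    have hc1 : 2 ≤ (π.parts.erase P).card := by
      rw [Finset.card_erase_of_mem hP]; omega
    have hQe : Q ∈ π.parts.erase P := Finset.mem_erase.mpr ⟨Ne.symm hPQ, hQ⟩
    have hc2 : 1 ≤ ((π.parts.erase P).erase Q).card := by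
      rw [Finset.card_erase_of_mem hQe]; omega
    obtain ⟨A, hA⟩ :=
      Finset.card_pos.mp (by omega : 0 < ((π.parts.erase P).erase Q).card)
    rw [Finset.mem_erase, Finset.mem_erase] at hA
    obtain ⟨hAQ, hAP, hAmem⟩ := hA
    obtain ⟨-, D, hD, hDA, hdisjAD, -, -, hPDS⟩ := hπ A hAmem
    have h1 : v1 ∈ ((A : Set (Fin 4)) ∪ (D : Set (Fin 4))) := one_mem_of_PDS (by omega) hPDS
    have h2 : v2 ∈ ((A : Set (Fin 4)) ∪ (D : Set (Fin 4))) := last2_mem_of_PDS (by omega) hPDS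
    have hv1A : v1 ∉ A := fun hmem =>
      (Finset.disjoint_left.mp (hdisj A hAmem P hP hAP) hmem) hv1P
    have hv2A : v2 ∉ A := fun hmem =>
      (Finset.disjoint_left.mp (hdisj A hAmem Q hQ hAQ) hmem) hv2Q
    have hv1D : v1 ∈ D := by
      rcases h1 with h | h
      · exact absurd (Finset.mem_coe.mp h) hv1A
      · exact Finset.mem_coe.mp h
    have hv2D : v2 ∈ D := by
      rcases h2 with h | h
      · exact absurd (Finset.mem_coe.mp h) hv2A
      · exact Finset.mem_coe.mp h
    have hDP : D = P := by
      by_contra hne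
      exact (Finset.disjoint_left.mp (hdisj D hD P hP hne) hv1D) hv1P
    have hDQ : D = Q := by
      by_contra hne
      exact (Finset.disjoint_left.mp (hdisj D hD Q hQ hne) hv2D) hv2Q
    exact hPQ (hDP ▸ hDQ)

end FourUB

open PCPaper in
/-- `PC(P_n) = 2` for `n = 2, 4` and `PC(P_n) = 3` otherwise. -/
theorem stmt_6 (n : ℕ) (hn : 2 ≤ n) :
    pcNumber (SimpleGraph.pathGraph n) = if n = 2 ∨ n = 4 then 2 else 3 := by
  by_cases h2 : n = 2
  · subst h2
    rw [if_pos (Or.inl rfl)]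
    apply pcNumber_eq _ 2 lower_n2
    intro π hπ
    calc π.parts.card ≤ (Finset.univ : Finset (Fin 2)).card := π.card_parts_le_card
      _ = 2 := by simp
  · by_cases h4 : n = 4
    · subst h4
      rw [if_pos (Or.inr rfl)]
      exact pcNumber_eq _ 2 lower_n4 parts_le_two_four
    · rw [if_neg (by tauto)]
      rcases Nat.even_or_odd n with he | ho
      · have he' : n % 2 = 0 := Nat.even_iff.mp he
        have h6 : 6 ≤ n := by omega
        exact pcNumber_eq _ 3 (lower_even h6 he') (fun π hπ => parts_le_three hn π hπ)
      · have ho' : n % 2 = 1 := Nat.odd_iff.mp ho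
        exact pcNumber_eq _ 3 (lower_odd (by omega) ho') (fun π hπ => parts_le_three hn π hπ)
end

section
/- A simple graph G is the paired coalition graph PCG(P, π) of some path P with respect to some pc-partition π of P if and only if G is isomorphic to P_2 or to P_3. -/
namespace PCAux
open SimpleGraph PCPaper

open Classical in
/-- distance from `m` down to the bottom of its "run" in `T`. -/
noncomputable def dfun (T : Set ℕ) (m : ℕ) : ℕ :=
  Nat.find (show ∃ d, d = m ∨ m - (d + 1) ∉ T from ⟨m, Or.inl rfl⟩)

open Classical in
lemma dfun_spec (T : Set ℕ) (m : ℕ) : dfun T m = m ∨ m - (dfun T m + 1) ∉ T :=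
  Nat.find_spec (show ∃ d, d = m ∨ m - (d + 1) ∉ T from ⟨m, Or.inl rfl⟩)

open Classical in
lemma dfun_min (T : Set ℕ) {m k : ℕ} (hk : k < dfun T m) : k ≠ m ∧ m - (k + 1) ∈ T := by
  have h := Nat.find_min (show ∃ d, d = m ∨ m - (d + 1) ∉ T from ⟨m, Or.inl rfl⟩) hk
  push_neg at h
  exact h

open Classical in
lemma dfun_le (T : Set ℕ) (m : ℕ) : dfun T m ≤ m := Nat.find_le (Or.inl rfl)

lemma mem_of_le_dfun {T : Set ℕ} {m k : ℕ} (hm : m ∈ T) (hk : k ≤ dfun T m) : m - k ∈ T := by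
  rcases Nat.eq_zero_or_pos k with rfl | hk0
  · simpa using hm
  · have h' : k - 1 < dfun T m := by omega
    have h2 := (dfun_min T h').2
    have e : m - (k - 1 + 1) = m - k := by omega
    rwa [e] at h2

open Classical in
lemma dfun_pred {T : Set ℕ} {m : ℕ} (h : 0 < dfun T m) :
    1 ≤ m ∧ m - 1 ∈ T ∧ dfun T (m - 1) = dfun T m - 1 := by
  have h0 := dfun_min T h
  have hm1 : 1 ≤ m := by
    rcases Nat.eq_zero_or_pos m with rfl | h'
    · exact absurd rfl h0.1
    · exact h'
  have hmem : m - 1 ∈ T := h0.2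
  refine ⟨hm1, hmem, le_antisymm ?_ ?_⟩
  · apply Nat.find_le
    rcases dfun_spec T m with he | hne
    · left; omega
    · right
      have : m - 1 - (dfun T m - 1 + 1) = m - (dfun T m + 1) := by omega
      rwa [this]
  · by_contra hlt
    push_neg at hlt
    set k := dfun T (m - 1) with hkdef
    have hk : k < dfun T m - 1 := hlt
    rcases dfun_spec T (m - 1) with he | hne
    · have := dfun_le T m; omega
    · have hmem2 := (dfun_min T (show k + 1 < dfun T m by omega)).2
      have : m - (k + 1 + 1) = m - 1 - (k + 1) := by omega
      rw [this] at hmem2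
      exact hne hmem2

open Classical in
lemma dfun_succ {T : Set ℕ} {m : ℕ} (hm : m ∈ T) (hm1 : m + 1 ∈ T) :
    dfun T (m + 1) = dfun T m + 1 := by
  refine le_antisymm ?_ ?_
  · apply Nat.find_le
    rcases dfun_spec T m with he | hne
    · left; omega
    · right
      have : m + 1 - (dfun T m + 1 + 1) = m - (dfun T m + 1) := by omega
      rwa [this]
  · by_contra hlt
    push_neg at hlt
    set k := dfun T (m + 1) with hkdef
    have hkm : k ≤ dfun T m := by omega
    rcases dfun_spec T (m + 1) with he | hne
    · have := dfun_le T m; omega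
    · have : m + 1 - (k + 1) = m - k := by omega
      rw [this] at hne
      exact hne (mem_of_le_dfun hm hkm)


/-- The set of values of members of `C`. -/
def Tset {n : ℕ} (C : Set (Fin n)) : Set ℕ := {m | ∃ h : m < n, (⟨m, h⟩ : Fin n) ∈ C}

lemma val_mem_Tset {n : ℕ} {C : Set (Fin n)} {v : Fin n} (hv : v ∈ C) : v.val ∈ Tset C :=
  ⟨v.isLt, hv⟩

/-- If every "run top" of `C` sits at odd distance from the bottom of its run, then
`C` has a perfect internal matching in the path graph. -/
lemma matching_of_no_oddtop {n : ℕ} (C : Set (Fin n))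
    (H : ∀ m ∈ Tset C, Even (dfun (Tset C) m) → m + 1 ∈ Tset C) :
    ∃ M : (pathGraph n).Subgraph, M.verts = C ∧ M.IsMatching := by
  set T := Tset C with hT
  refine ⟨{ verts := C
            Adj := fun u w => (u ∈ C ∧ w ∈ C) ∧
              ((u.val + 1 = w.val ∧ Even (dfun T u.val)) ∨
               (w.val + 1 = u.val ∧ Even (dfun T w.val)))
            adj_sub := fun h => pathGraph_adj.mpr (h.2.imp (·.1) (·.1))
            edge_vert := fun h => h.1.1
            symm := by
              constructor
              rintro u w ⟨⟨hu, hw⟩, h | h⟩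
              · exact ⟨⟨hw, hu⟩, Or.inr h⟩
              · exact ⟨⟨hw, hu⟩, Or.inl h⟩ }, rfl, ?_⟩
  intro v hv
  simp only [Set.mem_setOf_eq] at hv
  have hvT : v.val ∈ T := val_mem_Tset hv
  by_cases he : Even (dfun T v.val)
  · obtain ⟨hlt, hmem⟩ := H v.val hvT he
    refine ⟨⟨v.val + 1, hlt⟩, ⟨⟨hv, hmem⟩, Or.inl ⟨rfl, he⟩⟩, ?_⟩
    rintro w ⟨⟨-, hwC⟩, ⟨h1, -⟩ | ⟨h2, hew⟩⟩
    · exact Fin.ext h1.symm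
    · exfalso
      have hwT : w.val ∈ T := val_mem_Tset hwC
      have : dfun T (w.val + 1) = dfun T w.val + 1 := dfun_succ hwT (h2 ▸ hvT)
      rw [h2] at this
      rw [this] at he
      exact (Nat.even_add_one.mp he) hew
  · have hpos : 0 < dfun T v.val := Nat.pos_of_ne_zero (fun h0 => he (h0 ▸ Even.zero))
    obtain ⟨hv1, hmem, hd⟩ := dfun_pred hpos
    obtain ⟨hlt', hmemC⟩ := hmem
    have hev : Even (dfun T (v.val - 1)) := by
      rw [hd]
      rcases Nat.even_or_odd (dfun T v.val) with h | h
      · exact absurd h he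
      · exact Nat.Odd.sub_odd h odd_one
    refine ⟨⟨v.val - 1, hlt'⟩, ⟨⟨hv, hmemC⟩, Or.inr ⟨show v.val - 1 + 1 = v.val by omega, hev⟩⟩, ?_⟩
    rintro w ⟨⟨-, hwC⟩, ⟨-, hew⟩ | ⟨h2, -⟩⟩
    · exact absurd hew he
    · exact Fin.ext (show w.val = v.val - 1 by omega)

/-- An interval of the vertex set of a matching in a path graph which is "closed off"
on both sides has even size. -/
lemma run_even {n : ℕ} {M : (pathGraph n).Subgraph} (hM : M.IsMatching)
    {l m : ℕ} (hm : m < n) (hlm : l ≤ m)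
    (hsub : ∀ j (hj : j < n), l ≤ j → j ≤ m → (⟨j, hj⟩ : Fin n) ∈ M.verts)
    (hbot : l = 0 ∨ ∀ (h : l - 1 < n), (⟨l - 1, h⟩ : Fin n) ∉ M.verts)
    (htop : ∀ (h : m + 1 < n), (⟨m + 1, h⟩ : Fin n) ∉ M.verts) :
    Even (m + 1 - l) := by
  set I : Set (Fin n) := {v | l ≤ v.val ∧ v.val ≤ m} with hI
  let M' : (pathGraph n).Subgraph :=
    { verts := I
      Adj := fun u w => M.Adj u w ∧ u ∈ I ∧ w ∈ I
      adj_sub := fun h => M.adj_sub h.1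
      edge_vert := fun h => h.2.1
      symm := ⟨fun u w h => ⟨h.1.symm, h.2.2, h.2.1⟩⟩ }
  have hM' : M'.IsMatching := by
    intro v hv
    have hvI : v ∈ I := hv
    obtain ⟨hvl, hvm⟩ := hvI
    have hvM : v ∈ M.verts := by
      have := hsub v.val v.isLt hvl hvm
      simpa using this
    obtain ⟨w, hw, huniq⟩ := hM hvM
    have hwM : w ∈ M.verts := M.edge_vert hw.symm
    have hadj := M.adj_sub hw
    rw [pathGraph_adj] at hadj
    have hwI : w ∈ I := by
      constructor
      · rcases hadj with h | h
        · -- v.val + 1 = w.val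
          omega
        · -- w.val + 1 = v.val
          by_contra hlt
          push_neg at hlt
          have hwl : w.val = l - 1 := by omega
          have hl0 : l ≠ 0 := by omega
          rcases hbot with h0 | hb
          · exact hl0 h0
          · have hln : l - 1 < n := hwl ▸ w.isLt
            exact hb hln (by rwa [show (⟨l-1, hln⟩ : Fin n) = w from Fin.ext (show l - 1 = w.val by omega)])
      · rcases hadj with h | h
        · by_contra hlt
          push_neg at hlt
          have hwm : w.val = m + 1 := by omega
          have hmn : m + 1 < n := hwm ▸ w.isLt
          exact htop hmn (by rwa [show (⟨m+1, hmn⟩ : Fin n) = w from Fin.ext (show m + 1 = w.val by omega)])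
        · omega
    exact ⟨w, ⟨hw, ⟨hvl, hvm⟩, hwI⟩, fun y hy => huniq y hy.1⟩
  letI : Fintype M'.verts := Set.Finite.fintype (Set.toFinite _)
  have heven := hM'.even_card
  have hcard : M'.verts.toFinset = Finset.Icc (⟨l, lt_of_le_of_lt hlm hm⟩ : Fin n) ⟨m, hm⟩ := by
    ext v
    simp [Finset.mem_Icc, Fin.le_def, M', hI]
  rw [hcard, Fin.card_Icc] at heven
  simpa using heven


lemma exists_oddtop {n : ℕ} {C : Set (Fin n)} (hC : ¬ IsPairedDomSet (pathGraph n) C)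
    (hdom : IsDomSet (pathGraph n) C) :
    ∃ m ∈ Tset C, Even (dfun (Tset C) m) ∧ m + 1 ∉ Tset C := by
  by_contra h
  push_neg at h
  exact hC ⟨hdom, matching_of_no_oddtop C fun m hm he => h m hm he⟩

/-- A paired-coalition partner of `C` must contain one of the (at most two) vertices
closing off an odd maximal run of `C`. -/
lemma partner_hits {n : ℕ} {C A : Set (Fin n)}
    (hPDS : IsPairedDomSet (pathGraph n) (C ∪ A)) {m : ℕ}
    (hmT : m ∈ Tset C) (heven : Even (dfun (Tset C) m)) (htop : m + 1 ∉ Tset C) :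
    (∃ h : m - dfun (Tset C) m - 1 < n, (⟨m - dfun (Tset C) m - 1, h⟩ : Fin n) ∈ A)
    ∨ (∃ h : m + 1 < n, (⟨m + 1, h⟩ : Fin n) ∈ A) := by
  by_contra hcon
  push_neg at hcon
  obtain ⟨h1, h2⟩ := hcon
  obtain ⟨hmn, hmC⟩ := hmT
  obtain ⟨-, M, hverts, hmatch⟩ := hPDS
  set T := Tset C with hT
  set d := dfun T m with hd
  have hdm : d ≤ m := dfun_le T m
  have hrun := run_even hmatch (l := m - d) (m := m) hmn (by omega)
    (fun j hj hlj hjm => by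
      have hkd : m - j ≤ d := by omega
      have := mem_of_le_dfun (T := T) ⟨hmn, hmC⟩ hkd
      have hjT : j ∈ T := by
        have e : m - (m - j) = j := by omega
        rwa [e] at this
      obtain ⟨hj', hjC⟩ := hjT
      rw [hverts]
      exact Or.inl hjC)
    ?_ ?_
  · rw [show m + 1 - (m - d) = d + 1 by omega] at hrun
    exact (Nat.even_add_one.mp hrun) heven
  · -- bottom closed off
    rcases Nat.eq_zero_or_pos (m - d) with h0 | hpos
    · exact Or.inl h0
    · right
      intro h hmem
      rw [hverts] at hmem
      rcases hmem with hmem | hmem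
      · rcases dfun_spec T m with he | hne
        · omega
        · exact hne ⟨by omega, by
            rwa [show (⟨m - (d + 1), by omega⟩ : Fin n) = ⟨m - d - 1, h⟩ from
              Fin.ext (show m - (d+1) = m - d - 1 by omega)]⟩
      · exact h1 h hmem
  · -- top closed off
    intro h hmem
    rw [hverts] at hmem
    rcases hmem with hmem | hmem
    · exact htop ⟨h, hmem⟩
    · exact h2 h hmem

lemma not_dom_hits {n : ℕ} {C A : Set (Fin n)} {v : Fin n}
    (hv : v ∉ C) (hv' : ∀ u ∈ C, ¬ (pathGraph n).Adj u v)
    (hPDS : IsPairedDomSet (pathGraph n) (C ∪ A)) :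
    ∃ w ∈ A, (pathGraph n).Adj w v := by
  obtain ⟨hdom, M, hverts, hmatch⟩ := hPDS
  rcases hdom v with hvm | ⟨u, hu, hadj⟩
  · rcases hvm with hvC | hvA
    · exact absurd hvC hv
    · -- v itself in A; its matching partner is a neighbour not in C
      obtain ⟨w, hw, -⟩ := hmatch (by rw [hverts]; exact Or.inr hvA)
      have hadj : (pathGraph n).Adj v w := M.adj_sub hw
      have hwm : w ∈ M.verts := M.edge_vert hw.symm
      rw [hverts] at hwm
      rcases hwm with hwC | hwA
      · exact absurd hadj.symm (hv' w hwC)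
      · exact ⟨w, hwA, hadj.symm⟩
  · rcases hu with huC | huA
    · exact absurd hadj (hv' u huC)
    · exact ⟨u, huA, hadj⟩

/-- In a path graph, a non-paired-dominating set cannot have three pairwise disjoint
paired coalition partners. -/
lemma no_three_partners {n : ℕ} {C A B D : Set (Fin n)}
    (hC : ¬ IsPairedDomSet (pathGraph n) C)
    (hA : IsPairedDomSet (pathGraph n) (C ∪ A))
    (hB : IsPairedDomSet (pathGraph n) (C ∪ B))
    (hD : IsPairedDomSet (pathGraph n) (C ∪ D))
    (hAB : Disjoint A B) (hAD : Disjoint A D) (hBD : Disjoint B D) : False := by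
  by_cases hdom : IsDomSet (pathGraph n) C
  · -- C dominates, so it has an odd maximal run
    obtain ⟨m, hmT, heven, htop⟩ := exists_oddtop hC hdom
    have htA := partner_hits hA hmT heven htop
    have htB := partner_hits hB hmT heven htop
    have htD := partner_hits hD hmT heven htop
    rcases htA with ⟨h, hA1⟩ | ⟨h, hA2⟩ <;> rcases htB with ⟨h', hB1⟩ | ⟨h', hB2⟩ <;>
      rcases htD with ⟨h'', hD1⟩ | ⟨h'', hD2⟩
    · exact Set.disjoint_left.mp hAB hA1 hB1
    · exact Set.disjoint_left.mp hAB hA1 hB1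
    · exact Set.disjoint_left.mp hAD hA1 hD1
    · exact Set.disjoint_left.mp hBD hB2 hD2
    · exact Set.disjoint_left.mp hBD hB1 hD1
    · exact Set.disjoint_left.mp hAD hA2 hD2
    · exact Set.disjoint_left.mp hAB hA2 hB2
    · exact Set.disjoint_left.mp hAB hA2 hB2
  · -- some vertex v is not dominated by C
    simp only [IsDomSet, not_forall] at hdom
    obtain ⟨v, hv⟩ := hdom
    push_neg at hv
    obtain ⟨hvC, hv'⟩ := hv
    obtain ⟨a, haA, haadj⟩ := not_dom_hits hvC hv' hA
    obtain ⟨b, hbB, hbadj⟩ := not_dom_hits hvC hv' hB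
    obtain ⟨d, hdD, hdadj⟩ := not_dom_hits hvC hv' hD
    rw [pathGraph_adj] at haadj hbadj hdadj
    have : a.val = b.val ∨ a.val = d.val ∨ b.val = d.val := by omega
    rcases this with h | h | h
    · exact Set.disjoint_left.mp hAB haA (Fin.ext h ▸ hbB)
    · exact Set.disjoint_left.mp hAD haA (Fin.ext h ▸ hdD)
    · exact Set.disjoint_left.mp hBD hbB (Fin.ext h ▸ hdD)


/-- Every paired dominating set of a path on at least 2 vertices contains vertex 1. -/
lemma one_mem_pds {n : ℕ} (hn : 2 ≤ n) {S : Set (Fin n)}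
    (hS : IsPairedDomSet (pathGraph n) S) : (⟨1, by omega⟩ : Fin n) ∈ S := by
  obtain ⟨hdom, M, hverts, hmatch⟩ := hS
  rcases hdom ⟨0, by omega⟩ with h0 | ⟨u, hu, hadj⟩
  · obtain ⟨w, hw, -⟩ := hmatch (by rw [hverts]; exact h0)
    have hadj := M.adj_sub hw
    rw [pathGraph_adj] at hadj
    simp only [Fin.val_mk] at hadj
    have hwm : w ∈ M.verts := M.edge_vert hw.symm
    rw [hverts] at hwm
    rwa [show (⟨1, by omega⟩ : Fin n) = w from Fin.ext (show (1:ℕ) = w.val by omega)]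
  · rw [pathGraph_adj] at hadj
    simp only [Fin.val_mk] at hadj
    rwa [show (⟨1, by omega⟩ : Fin n) = u from Fin.ext (show (1:ℕ) = u.val by omega)]

/-- Every paired dominating set of a path on at least 2 vertices contains vertex `n - 2`. -/
lemma sub_two_mem_pds {n : ℕ} (hn : 2 ≤ n) {S : Set (Fin n)}
    (hS : IsPairedDomSet (pathGraph n) S) : (⟨n - 2, by omega⟩ : Fin n) ∈ S := by
  obtain ⟨hdom, M, hverts, hmatch⟩ := hS
  rcases hdom ⟨n - 1, by omega⟩ with h0 | ⟨u, hu, hadj⟩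
  · obtain ⟨w, hw, -⟩ := hmatch (by rw [hverts]; exact h0)
    have hadj := M.adj_sub hw
    rw [pathGraph_adj] at hadj
    simp only [Fin.val_mk] at hadj
    have hwm : w ∈ M.verts := M.edge_vert hw.symm
    rw [hverts] at hwm
    have hwn : w.val < n := w.isLt
    rwa [show (⟨n - 2, by omega⟩ : Fin n) = w from Fin.ext (show n - 2 = w.val by omega)]
  · rw [pathGraph_adj] at hadj
    simp only [Fin.val_mk] at hadj
    have hun : u.val < n := u.isLt
    rwa [show (⟨n - 2, by omega⟩ : Fin n) = u from Fin.ext (show n - 2 = u.val by omega)]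

/-- A set of odd cardinality is not a paired dominating set. -/
lemma not_pds_of_odd {V : Type*} [Fintype V] {G : SimpleGraph V} {S : Set V}
    (h : ¬ Even S.ncard) : ¬ IsPairedDomSet G S := by
  rintro ⟨-, M, hverts, hmatch⟩
  letI : Fintype M.verts := Set.Finite.fintype (Set.toFinite _)
  have := hmatch.even_card
  rw [← Set.ncard_eq_toFinset_card'] at this
  rw [hverts] at this
  exact h this

open Classical in
/-- Build an isomorphism with `P_2` from a two-element description. -/
noncomputable def iso2 {α : Type*} (H : SimpleGraph α) (a b : α) (hab : a ≠ b)
    (hall : ∀ x, x = a ∨ x = b) (hadj : H.Adj a b) : H ≃g pathGraph 2 where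
  toFun x := if x = a then 0 else 1
  invFun i := if i = 0 then a else b
  left_inv x := by
    rcases hall x with rfl | rfl
    · simp
    · simp [hab.symm]
  right_inv i := by
    fin_cases i
    · simp
    · simp [hab.symm]
  map_rel_iff' := by
    intro x y
    rcases hall x with rfl | rfl <;> rcases hall y with rfl | rfl <;>
      simp [hab, hab.symm, pathGraph_adj, hadj, hadj.symm, H.irrefl]

open Classical in
/-- Build an isomorphism with `P_3` from a three-element description. -/
noncomputable def iso3 {α : Type*} (H : SimpleGraph α) (a b c : α)
    (hab : a ≠ b) (hac : a ≠ c) (hbc : b ≠ c)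
    (hall : ∀ x, x = a ∨ x = b ∨ x = c)
    (hadjab : H.Adj a b) (hadjbc : H.Adj b c) (hnadj : ¬ H.Adj a c) :
    H ≃g pathGraph 3 where
  toFun x := if x = a then 0 else if x = b then 1 else 2
  invFun i := if i = 0 then a else if i = 1 then b else c
  left_inv x := by
    rcases hall x with rfl | rfl | rfl
    · simp
    · simp [hab.symm]
    · simp [hac.symm, hbc.symm]
  right_inv i := by
    fin_cases i
    · simp
    · simp [hab.symm]
    · simp [hac.symm, hbc.symm]
  map_rel_iff' := by
    intro x y
    have hnadj' : ¬ H.Adj c a := fun h => hnadj h.symm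
    rcases hall x with rfl | rfl | rfl <;> rcases hall y with rfl | rfl | rfl <;>
      simp [hab, hab.symm, hac, hac.symm, hbc, hbc.symm, pathGraph_adj,
        hadjab, hadjab.symm, hadjbc, hadjbc.symm, hnadj, hnadj', H.irrefl]


/-- Forward direction: the PCG of any pc-partition of a path is `P_2` or `P_3`. -/
lemma forward {n : ℕ} (hn : 1 ≤ n) (π : Finpartition (Finset.univ : Finset (Fin n)))
    (hπ : IsPCPartition (pathGraph n) π) :
    Nonempty (PCG (pathGraph n) π ≃g pathGraph 2) ∨
      Nonempty (PCG (pathGraph n) π ≃g pathGraph 3) := by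
  set H := PCG (pathGraph n) π with hH
  have hex : ∀ X : {A : Finset (Fin n) // A ∈ π.parts}, ∃ Y, Y ≠ X ∧ H.Adj X Y := by
    intro X
    obtain ⟨-, B, hB, hne, hco⟩ := hπ X.1 X.2
    exact ⟨⟨B, hB⟩, fun h => hne (Subtype.ext_iff.mp h), hco⟩
  -- n ≥ 2
  have hn2 : 2 ≤ n := by
    by_contra hcon
    have hn1 : n = 1 := by omega
    set z : Fin n := ⟨0, by omega⟩ with hz
    have h0 : z ∈ (Finset.univ : Finset (Fin n)) := Finset.mem_univ _
    obtain ⟨Y, -, hadj⟩ := hex ⟨π.part z, π.part_mem.mpr h0⟩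
    have hpds := hadj.2.2.2
    obtain ⟨-, M, hverts, hmatch⟩ := hpds
    have h0m : z ∈ M.verts := by
      rw [hverts]; exact Or.inl (Finset.mem_coe.mpr (π.mem_part h0))
    obtain ⟨w, hw, -⟩ := hmatch h0m
    have hadj' := M.adj_sub hw
    rw [pathGraph_adj] at hadj'
    have hw1 := w.isLt
    have hz1 : z.val = 0 := rfl
    omega
  set v1 : Fin n := ⟨1, by omega⟩ with hv1
  set v2 : Fin n := ⟨n - 2, by omega⟩ with hv2
  set c1 : {A : Finset (Fin n) // A ∈ π.parts} :=
    ⟨π.part v1, π.part_mem.mpr (Finset.mem_univ v1)⟩ with hc1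
  set c2 : {A : Finset (Fin n) // A ∈ π.parts} :=
    ⟨π.part v2, π.part_mem.mpr (Finset.mem_univ v2)⟩ with hc2
  have touch1 : ∀ X Y, H.Adj X Y → X = c1 ∨ Y = c1 := by
    intro X Y hadj
    rcases one_mem_pds hn2 hadj.2.2.2 with h | h
    · exact Or.inl (Subtype.ext (π.eq_of_mem_parts X.2 (π.part_mem.mpr (Finset.mem_univ v1))
        (Finset.mem_coe.mp h) (π.mem_part (Finset.mem_univ v1))))
    · exact Or.inr (Subtype.ext (π.eq_of_mem_parts Y.2 (π.part_mem.mpr (Finset.mem_univ v1))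
        (Finset.mem_coe.mp h) (π.mem_part (Finset.mem_univ v1))))
  have touch2 : ∀ X Y, H.Adj X Y → X = c2 ∨ Y = c2 := by
    intro X Y hadj
    rcases sub_two_mem_pds hn2 hadj.2.2.2 with h | h
    · exact Or.inl (Subtype.ext (π.eq_of_mem_parts X.2 (π.part_mem.mpr (Finset.mem_univ v2))
        (Finset.mem_coe.mp h) (π.mem_part (Finset.mem_univ v2))))
    · exact Or.inr (Subtype.ext (π.eq_of_mem_parts Y.2 (π.part_mem.mpr (Finset.mem_univ v2))
        (Finset.mem_coe.mp h) (π.mem_part (Finset.mem_univ v2))))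
  have hdisj : ∀ (Y Z : {A : Finset (Fin n) // A ∈ π.parts}), Y ≠ Z →
      Disjoint ((Y.1 : Finset (Fin n)) : Set (Fin n)) ((Z.1 : Finset (Fin n)) : Set (Fin n)) := by
    intro Y Z hne
    exact Finset.disjoint_coe.mpr (π.supIndep.pairwiseDisjoint
      (Finset.mem_coe.mpr Y.2) (Finset.mem_coe.mpr Z.2) fun h => hne (Subtype.ext h))
  have deg : ∀ (X Y Z W : {A : Finset (Fin n) // A ∈ π.parts}), Y ≠ Z → Y ≠ W → Z ≠ W →
      H.Adj X Y → H.Adj X Z → H.Adj X W → False := by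
    intro X Y Z W hYZ hYW hZW h1 h2 h3
    exact no_three_partners h1.2.1 h1.2.2.2 h2.2.2.2 h3.2.2.2
      (hdisj Y Z hYZ) (hdisj Y W hYW) (hdisj Z W hZW)
  rcases eq_or_ne c1 c2 with hc | hc
  · -- c1 = c2 : every edge touches c1, so we get a star centered at c1
    have hstar : ∀ X, X ≠ c1 → H.Adj c1 X := by
      intro X hX
      obtain ⟨Y, hYne, hadj⟩ := hex X
      rcases touch1 X Y hadj with h | h
      · exact absurd h hX
      · exact (h ▸ hadj).symm
    obtain ⟨Y0, hY0ne, hY0adj⟩ := hex c1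
    by_cases h2 : ∀ X, X = c1 ∨ X = Y0
    · exact Or.inl ⟨iso2 H c1 Y0 (Ne.symm hY0ne) (fun x => h2 x) hY0adj⟩
    · push_neg at h2
      obtain ⟨Z, hZ1, hZY⟩ := h2
      by_cases h3 : ∀ X, X = c1 ∨ X = Y0 ∨ X = Z
      · refine Or.inr ⟨iso3 H Y0 c1 Z hY0ne (Ne.symm hZY) (Ne.symm hZ1)
          (fun x => by rcases h3 x with h | h | h
                       · exact Or.inr (Or.inl h)
                       · exact Or.inl h
                       · exact Or.inr (Or.inr h))
          hY0adj.symm (hstar Z hZ1) ?_⟩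
        intro hadj
        rcases touch1 Y0 Z hadj with h | h
        · exact hY0ne h
        · exact hZ1 h
      · push_neg at h3
        obtain ⟨W, hW1, hWY, hWZ⟩ := h3
        exact absurd (deg c1 Y0 Z W (Ne.symm hZY) (Ne.symm hWY) (Ne.symm hWZ)
          hY0adj (hstar Z hZ1) (hstar W hW1)) (fun h => h)
  · -- c1 ≠ c2 : every part is c1 or c2
    have hall : ∀ X, X = c1 ∨ X = c2 := by
      intro X
      by_contra hcon
      push_neg at hcon
      obtain ⟨Y, hYne, hadj⟩ := hex X
      rcases touch1 X Y hadj with h | h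
      · exact hcon.1 h
      · rcases touch2 X Y hadj with h' | h'
        · exact hcon.2 h'
        · exact hc (h ▸ h' ▸ rfl)
    obtain ⟨Y, hYne, hadj⟩ := hex c1
    have hY : Y = c2 := by
      rcases hall Y with h | h
      · exact absurd h hYne
      · exact h
    exact Or.inl ⟨iso2 H c1 c2 hc hall (hY ▸ hadj)⟩


section Reverse

lemma not_pds_coe_singleton {n : ℕ} [NeZero n] (v : Fin n) {G : SimpleGraph (Fin n)} :
    ¬ IsPairedDomSet G ((({v} : Finset (Fin n)) : Set (Fin n))) := by
  apply not_pds_of_odd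
  simp [Set.ncard_singleton]

-- the path graph on 2 vertices
lemma adj2_01 : (pathGraph 2).Adj 0 1 := pathGraph_adj.mpr (Or.inl rfl)

lemma pds2_01 :
    IsPairedDomSet (pathGraph 2)
      ((({0} : Finset (Fin 2)) : Set (Fin 2)) ∪ (({1} : Finset (Fin 2)) : Set (Fin 2))) := by
  constructor
  · intro v
    left
    fin_cases v <;> simp
  · refine ⟨(pathGraph 2).subgraphOfAdj adj2_01, ?_,
      Subgraph.IsMatching.subgraphOfAdj adj2_01⟩
    rw [subgraphOfAdj_verts]
    ext v
    fin_cases v <;> simp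

lemma coalition2 :
    PairedCoalition (pathGraph 2) (({0} : Finset (Fin 2)) : Set (Fin 2))
      ((({1} : Finset (Fin 2)) : Set (Fin 2))) :=
  ⟨Finset.disjoint_coe.mpr (by decide), not_pds_coe_singleton _, not_pds_coe_singleton _, pds2_01⟩

lemma mem_bot2 (v : Fin 2) : ({v} : Finset (Fin 2)) ∈ (⊥ : Finpartition (Finset.univ : Finset (Fin 2))).parts :=
  Finpartition.mem_bot_iff.mpr ⟨v, Finset.mem_univ _, rfl⟩

lemma pc2 : IsPCPartition (pathGraph 2) (⊥ : Finpartition (Finset.univ : Finset (Fin 2))) := by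
  intro A hA
  rw [Finpartition.mem_bot_iff] at hA
  obtain ⟨a, -, rfl⟩ := hA
  fin_cases a
  · exact ⟨not_pds_coe_singleton _, {1}, mem_bot2 1, by decide, coalition2⟩
  · refine ⟨not_pds_coe_singleton _, {0}, mem_bot2 0, by decide, ?_⟩
    obtain ⟨h1, h2, h3, h4⟩ := coalition2
    exact ⟨h1.symm, h3, h2, by rwa [Set.union_comm]⟩

lemma pcg2_iso : Nonempty (PCG (pathGraph 2) (⊥ : Finpartition (Finset.univ : Finset (Fin 2)))
    ≃g pathGraph 2) := by
  refine ⟨iso2 _ ⟨{0}, mem_bot2 0⟩ ⟨{1}, mem_bot2 1⟩ (fun h => ?_) (fun X => ?_) coalition2⟩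
  · exact absurd (Subtype.ext_iff.mp h) (by decide)
  · have hX := X.2
    rw [Finpartition.mem_bot_iff] at hX
    obtain ⟨a, -, ha⟩ := hX
    fin_cases a
    · exact Or.inl (Subtype.ext ha.symm)
    · exact Or.inr (Subtype.ext ha.symm)

-- the path graph on 3 vertices
lemma adj3_01 : (pathGraph 3).Adj 0 1 := pathGraph_adj.mpr (Or.inl rfl)
lemma adj3_12 : (pathGraph 3).Adj 1 2 := pathGraph_adj.mpr (Or.inl rfl)

lemma pds3_01 :
    IsPairedDomSet (pathGraph 3)
      ((({0} : Finset (Fin 3)) : Set (Fin 3)) ∪ (({1} : Finset (Fin 3)) : Set (Fin 3))) := by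
  constructor
  · intro v
    fin_cases v
    · left; simp
    · left; simp
    · right
      exact ⟨1, by simp, adj3_12⟩
  · refine ⟨(pathGraph 3).subgraphOfAdj adj3_01, ?_,
      Subgraph.IsMatching.subgraphOfAdj adj3_01⟩
    rw [subgraphOfAdj_verts]
    ext v
    fin_cases v <;> simp

lemma pds3_12 :
    IsPairedDomSet (pathGraph 3)
      ((({1} : Finset (Fin 3)) : Set (Fin 3)) ∪ (({2} : Finset (Fin 3)) : Set (Fin 3))) := by
  constructor
  · intro v
    fin_cases v
    · right
      exact ⟨1, by simp, adj3_01.symm⟩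
    · left; simp
    · left; simp
  · refine ⟨(pathGraph 3).subgraphOfAdj adj3_12, ?_,
      Subgraph.IsMatching.subgraphOfAdj adj3_12⟩
    rw [subgraphOfAdj_verts]
    ext v
    fin_cases v <;> simp

lemma not_pds3_02 :
    ¬ IsPairedDomSet (pathGraph 3)
      ((({0} : Finset (Fin 3)) : Set (Fin 3)) ∪ (({2} : Finset (Fin 3)) : Set (Fin 3))) := by
  rintro ⟨-, M, hverts, hmatch⟩
  have h0 : (0 : Fin 3) ∈ M.verts := by rw [hverts]; simp
  obtain ⟨w, hw, -⟩ := hmatch h0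
  have hadj := M.adj_sub hw
  have hwm : w ∈ M.verts := M.edge_vert hw.symm
  rw [hverts] at hwm
  simp at hwm
  rw [pathGraph_adj] at hadj
  rcases hwm with rfl | rfl
  · revert hadj; decide
  · revert hadj; decide

lemma coalition3_01 :
    PairedCoalition (pathGraph 3) (({0} : Finset (Fin 3)) : Set (Fin 3))
      ((({1} : Finset (Fin 3)) : Set (Fin 3))) :=
  ⟨Finset.disjoint_coe.mpr (by decide), not_pds_coe_singleton _, not_pds_coe_singleton _, pds3_01⟩

lemma coalition3_12 :
    PairedCoalition (pathGraph 3) (({1} : Finset (Fin 3)) : Set (Fin 3))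
      ((({2} : Finset (Fin 3)) : Set (Fin 3))) :=
  ⟨Finset.disjoint_coe.mpr (by decide), not_pds_coe_singleton _, not_pds_coe_singleton _, pds3_12⟩

lemma mem_bot3 (v : Fin 3) : ({v} : Finset (Fin 3)) ∈ (⊥ : Finpartition (Finset.univ : Finset (Fin 3))).parts :=
  Finpartition.mem_bot_iff.mpr ⟨v, Finset.mem_univ _, rfl⟩

lemma pc3 : IsPCPartition (pathGraph 3) (⊥ : Finpartition (Finset.univ : Finset (Fin 3))) := by
  intro A hA
  rw [Finpartition.mem_bot_iff] at hA
  obtain ⟨a, -, rfl⟩ := hA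
  fin_cases a
  · exact ⟨not_pds_coe_singleton _, {1}, mem_bot3 1, by decide, coalition3_01⟩
  · refine ⟨not_pds_coe_singleton _, {0}, mem_bot3 0, by decide, ?_⟩
    obtain ⟨h1, h2, h3, h4⟩ := coalition3_01
    exact ⟨h1.symm, h3, h2, by rwa [Set.union_comm]⟩
  · refine ⟨not_pds_coe_singleton _, {1}, mem_bot3 1, by decide, ?_⟩
    obtain ⟨h1, h2, h3, h4⟩ := coalition3_12
    exact ⟨h1.symm, h3, h2, by rwa [Set.union_comm]⟩

lemma pcg3_iso : Nonempty (PCG (pathGraph 3) (⊥ : Finpartition (Finset.univ : Finset (Fin 3)))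
    ≃g pathGraph 3) := by
  refine ⟨iso3 _ ⟨{0}, mem_bot3 0⟩ ⟨{1}, mem_bot3 1⟩ ⟨{2}, mem_bot3 2⟩
    (fun h => ?_) (fun h => ?_) (fun h => ?_) (fun X => ?_)
    coalition3_01 coalition3_12 (fun h => not_pds3_02 h.2.2.2)⟩
  · exact absurd (Subtype.ext_iff.mp h) (by decide)
  · exact absurd (Subtype.ext_iff.mp h) (by decide)
  · exact absurd (Subtype.ext_iff.mp h) (by decide)
  · have hX := X.2
    rw [Finpartition.mem_bot_iff] at hX
    obtain ⟨a, -, ha⟩ := hX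
    fin_cases a
    · exact Or.inl (Subtype.ext ha.symm)
    · exact Or.inr (Or.inl (Subtype.ext ha.symm))
    · exact Or.inr (Or.inr (Subtype.ext ha.symm))

end Reverse
end PCAux

open PCPaper in
/-- A graph is the paired coalition graph of some path with respect to some pc-partition
iff it is isomorphic to `P_2` or `P_3`. -/
theorem stmt_7 {W : Type*} [Fintype W] (G : SimpleGraph W) :
    (∃ (n : ℕ), 1 ≤ n ∧ ∃ π : Finpartition (Finset.univ : Finset (Fin n)),
        IsPCPartition (SimpleGraph.pathGraph n) π ∧
        Nonempty (G ≃g PCG (SimpleGraph.pathGraph n) π)) ↔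
    (Nonempty (G ≃g SimpleGraph.pathGraph 2) ∨ Nonempty (G ≃g SimpleGraph.pathGraph 3)) := by
  constructor
  · rintro ⟨n, hn, π, hπ, ⟨e⟩⟩
    rcases PCAux.forward hn π hπ with hi | hi
    · obtain ⟨i⟩ := hi
      exact Or.inl ⟨e.trans i⟩
    · obtain ⟨i⟩ := hi
      exact Or.inr ⟨e.trans i⟩
  · rintro (he | he)
    · obtain ⟨e⟩ := he
      obtain ⟨i⟩ := PCAux.pcg2_iso
      exact ⟨2, by norm_num, ⊥, PCAux.pc2, ⟨e.trans i.symm⟩⟩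
    · obtain ⟨e⟩ := he
      obtain ⟨i⟩ := PCAux.pcg3_iso
      exact ⟨3, by norm_num, ⊥, PCAux.pc3, ⟨e.trans i.symm⟩⟩
end

section
/- Let T be a tree containing at least one strong support vertex, let v_1, …, v_t be the strong support vertices of T, and for each i let l_i be the number of leaves of T adjacent to v_i. If T admits a pc-partition, then PC(T) ≥ max{l_i : i = 1, …, t} + 1. -/
open Finset in
lemma leaf_unique_in_pds {V : Type*} [Fintype V] [DecidableEq V] (T : SimpleGraph V)
    [DecidableRel T.Adj] {S : Set V} (hS : PCPaper.IsPairedDomSet T S) {v u1 u2 : V}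
    (h1 : T.Adj v u1) (d1 : T.degree u1 = 1) (h2 : T.Adj v u2) (d2 : T.degree u2 = 1)
    (hu1 : u1 ∈ S) (hu2 : u2 ∈ S) : u1 = u2 := by
  obtain ⟨-, M, hMv, hM⟩ := hS
  have key : ∀ u : V, T.Adj v u → T.degree u = 1 → u ∈ S → M.Adj v u := by
    intro u hvu hdu huS
    obtain ⟨w, hw, -⟩ := hM (hMv ▸ huS)
    have hTw : T.Adj u w := M.adj_sub hw
    have hwv : w = v := by
      have hmw : w ∈ T.neighborFinset u := (T.mem_neighborFinset u w).2 hTw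
      have hmv : v ∈ T.neighborFinset u := (T.mem_neighborFinset u v).2 hvu.symm
      exact Finset.card_le_one.mp (le_of_eq hdu) _ hmw _ hmv
    exact (hwv ▸ hw).symm
  have hvS : v ∈ M.verts := M.edge_vert (key u1 h1 d1 hu1)
  obtain ⟨w, -, hwu⟩ := hM hvS
  exact (hwu u1 (key u1 h1 d1 hu1)).trans (hwu u2 (key u2 h2 d2 hu2)).symm

open PCPaper Finset in
/-- If a tree `T` has a strong support vertex and admits a pc-partition, then
`PC(T) ≥ max{l_i} + 1`, i.e. `PC(T) ≥ l_v + 1` for every strong support vertex `v`,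
where `l_v` is the number of leaves adjacent to `v`. -/
theorem stmt_11 {V : Type*} [Fintype V] [DecidableEq V] (T : SimpleGraph V)
    [DecidableRel T.Adj] (hT : T.IsTree)
    (hstrong : ∃ v, 2 ≤ (univ.filter fun u => T.Adj v u ∧ T.degree u = 1).card)
    (hpc : ∃ π : Finpartition (univ : Finset V), IsPCPartition T π) :
    ∀ v : V, 2 ≤ (univ.filter fun u => T.Adj v u ∧ T.degree u = 1).card →
      (univ.filter fun u => T.Adj v u ∧ T.degree u = 1).card + 1 ≤ pcNumber T := by
  intro v hl
  obtain ⟨π, hπ⟩ := hpc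
  set L := univ.filter fun u => T.Adj v u ∧ T.degree u = 1 with hL
  have hleaf : ∀ u ∈ L, T.Adj v u ∧ T.degree u = 1 := by
    intro u hu; simpa [hL] using hu
  -- no PDS contains two distinct leaves of v
  have key : ∀ S : Set V, PCPaper.IsPairedDomSet T S →
      ∀ u1 ∈ L, ∀ u2 ∈ L, u1 ∈ S → u2 ∈ S → u1 = u2 := by
    intro S hS u1 h1 u2 h2 hu1 hu2
    exact leaf_unique_in_pds T hS (hleaf u1 h1).1 (hleaf u1 h1).2
      (hleaf u2 h2).1 (hleaf u2 h2).2 hu1 hu2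
  have hmem : ∀ u : V, u ∈ π.part u := fun u => π.mem_part (mem_univ u)
  have hpmem : ∀ u : V, π.part u ∈ π.parts := fun u => π.part_mem.2 (mem_univ u)
  have hinj : Set.InjOn π.part (L : Set V) := by
    intro u1 h1 u2 h2 heq
    obtain ⟨-, B, hB, -, hco⟩ := hπ (π.part u1) (hpmem u1)
    have hPDS := hco.2.2.2
    refine key _ hPDS u1 h1 u2 h2 (Set.mem_union_left _ (by exact_mod_cast hmem u1)) ?_
    exact Set.mem_union_left _ (by exact_mod_cast heq ▸ hmem u2)
  obtain ⟨u0, hu0⟩ : L.Nonempty := Finset.card_pos.mp (by omega)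
  obtain ⟨-, B, hB, hBne, hco⟩ := hπ (π.part u0) (hpmem u0)
  have hPDS := hco.2.2.2
  have hBnotin : B ∉ L.image π.part := by
    intro hmemB
    obtain ⟨u, huL, hfu⟩ := Finset.mem_image.mp hmemB
    have huB : u ∈ B := hfu ▸ hmem u
    have : u = u0 := key _ hPDS u huL u0 hu0
      (Set.mem_union_right _ (by exact_mod_cast huB))
      (Set.mem_union_left _ (by exact_mod_cast hmem u0))
    exact hBne (hfu ▸ congrArg π.part this)
  have hsub : insert B (L.image π.part) ⊆ π.parts := by
    intro P hP
    rcases Finset.mem_insert.mp hP with h | h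
    · exact h ▸ hB
    · obtain ⟨u, -, hfu⟩ := Finset.mem_image.mp h
      exact hfu ▸ hpmem u
  have hcard : L.card + 1 ≤ π.parts.card := by
    calc L.card + 1 = (insert B (L.image π.part)).card := by
          rw [Finset.card_insert_of_notMem hBnotin, Finset.card_image_of_injOn hinj]
        _ ≤ π.parts.card := Finset.card_le_card hsub
  refine le_trans hcard (le_csSup ?_ ⟨π, hπ, rfl⟩)
  refine ⟨Fintype.card V, ?_⟩
  rintro k ⟨π', -, rfl⟩
  simpa using π'.card_parts_le_card
end

section
/- Let T be a tree that has a perfect matching, and let T′ be the tree obtained from T by attaching at least two new leaves to each vertex of T (i.e., for each vertex v of T, at least two new pendant vertices adjacent only to v are added). Then T′ admits no pc-partition, i.e., PC(T′) = 0. -/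
namespace PCPaper

/-- The graph obtained from `T` by attaching, for each `w : W`, a new pendant vertex
adjacent exactly to `f w`. -/
def attachLeaves {V W : Type*} (T : SimpleGraph V) (f : W → V) : SimpleGraph (V ⊕ W) :=
  SimpleGraph.fromRel (fun x y =>
    match x, y with
    | Sum.inl u, Sum.inl u' => T.Adj u u'
    | Sum.inl u, Sum.inr w => f w = u
    | _, _ => False)

end PCPaper


namespace PCPaper

variable {V W : Type*}

lemma attach_adj_inr (T : SimpleGraph V) (f : W → V) (x : V ⊕ W) (w : W) :
    (attachLeaves T f).Adj x (Sum.inr w) ↔ x = Sum.inl (f w) := by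
  cases x with
  | inl u =>
    simp [attachLeaves, SimpleGraph.fromRel_adj]
    exact eq_comm
  | inr w' =>
    simp [attachLeaves, SimpleGraph.fromRel_adj]

lemma attach_adj_inl (T : SimpleGraph V) (f : W → V) (u u' : V) :
    (attachLeaves T f).Adj (Sum.inl u) (Sum.inl u') ↔ T.Adj u u' := by
  simp [attachLeaves, SimpleGraph.fromRel_adj]
  constructor
  · rintro ⟨-, h | h⟩
    · exact h
    · exact h.symm
  · intro h
    exact ⟨by simpa using h.ne, Or.inl h⟩

lemma two_leaves_not_pds (T : SimpleGraph V) (f : W → V) {S : Set (V ⊕ W)} {w1 w2 : W}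
    (h12 : w1 ≠ w2) (hfw : f w1 = f w2) (h1 : Sum.inr w1 ∈ S) (h2 : Sum.inr w2 ∈ S) :
    ¬ IsPairedDomSet (attachLeaves T f) S := by
  rintro ⟨-, M, hMv, hM⟩
  obtain ⟨x1, hx1, hu1⟩ := hM (hMv ▸ h1 : Sum.inr w1 ∈ M.verts)
  obtain ⟨x2, hx2, hu2⟩ := hM (hMv ▸ h2 : Sum.inr w2 ∈ M.verts)
  have e1 : x1 = Sum.inl (f w1) := by
    have := M.adj_sub hx1
    rw [SimpleGraph.adj_comm, attach_adj_inr] at this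
    exact this
  have e2 : x2 = Sum.inl (f w2) := by
    have := M.adj_sub hx2
    rw [SimpleGraph.adj_comm, attach_adj_inr] at this
    exact this
  have hx : x1 = x2 := by rw [e1, e2, hfw]
  subst hx
  obtain ⟨y, hy, hyu⟩ := hM (M.edge_vert (M.adj_symm hx1))
  have hw1 : Sum.inr w1 = y := hyu _ (M.adj_symm hx1)
  have hw2 : Sum.inr w2 = y := hyu _ (M.adj_symm hx2)
  exact h12 (by simpa using hw1.trans hw2.symm)

lemma two_leaves_exist (f : W → V) (hf : ∀ v : V, 2 ≤ Set.ncard {w : W | f w = v}) (v : V)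
    [Fintype W] : ∃ w1 w2 : W, w1 ≠ w2 ∧ f w1 = v ∧ f w2 = v := by
  have h := (Set.one_lt_ncard (Set.toFinite _)).mp (lt_of_lt_of_le one_lt_two (hf v))
  obtain ⟨a, ha, b, hb, hab⟩ := h
  exact ⟨a, b, hab, ha, hb⟩

lemma pds_contains_inl (T : SimpleGraph V) (f : W → V)
    (hf : ∀ v : V, 2 ≤ Set.ncard {w : W | f w = v}) [Fintype W]
    {S : Set (V ⊕ W)} (hS : IsPairedDomSet (attachLeaves T f) S) (v : V) :
    Sum.inl v ∈ S := by
  by_contra hv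
  obtain ⟨w1, w2, h12, hf1, hf2⟩ := two_leaves_exist f hf v
  have key : ∀ w : W, f w = v → Sum.inr w ∈ S := by
    intro w hw
    rcases hS.1 (Sum.inr w) with h | ⟨u, hu, hadj⟩
    · exact h
    · rw [attach_adj_inr] at hadj
      exact absurd hu (by rw [hadj, hw]; exact hv)
  exact two_leaves_not_pds T f h12 (hf1.trans hf2.symm) (key _ hf1) (key _ hf2) hS

/-- The image of `V` is a paired dominating set. -/
lemma range_inl_pds (T : SimpleGraph V) (f : W → V)
    (hpm : ∃ M : T.Subgraph, M.IsPerfectMatching) :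
    IsPairedDomSet (attachLeaves T f) (Set.range (Sum.inl : V → V ⊕ W)) := by
  obtain ⟨M, hM, hMs⟩ := hpm
  constructor
  · intro x
    cases x with
    | inl u => exact Or.inl ⟨u, rfl⟩
    | inr w =>
      refine Or.inr ⟨Sum.inl (f w), ⟨f w, rfl⟩, ?_⟩
      rw [attach_adj_inr]
  · have hhom : ∀ u u', T.Adj u u' →
        (attachLeaves T f).Adj (Sum.inl u : V ⊕ W) (Sum.inl u') := by
      intro u u' h; rw [attach_adj_inl]; exact h
    refine ⟨M.map ⟨Sum.inl, fun h => hhom _ _ h⟩, ?_, ?_⟩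
    · ext x
      simp only [SimpleGraph.Subgraph.map_verts, Set.mem_image, Set.mem_range]
      constructor
      · rintro ⟨u, -, rfl⟩; exact ⟨u, rfl⟩
      · rintro ⟨u, rfl⟩; exact ⟨u, hMs u, rfl⟩
    · exact hM.map _ Sum.inl_injective

end PCPaper

open PCPaper in
/-- If a tree `T` has a perfect matching and `T'` is obtained from `T` by attaching at
least two new leaves to each vertex of `T`, then `T'` has no pc-partition. -/
theorem stmt_12 {V W : Type*} [Fintype V] [DecidableEq V] [Fintype W] [DecidableEq W]
    (T : SimpleGraph V) (hT : T.IsTree)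
    (hpm : ∃ M : T.Subgraph, M.IsPerfectMatching)
    (f : W → V) (hf : ∀ v : V, 2 ≤ Set.ncard {w : W | f w = v}) :
    pcNumber (attachLeaves T f) = 0 := by
  set G := attachLeaves T f with hG
  have hno : ∀ π : Finpartition (Finset.univ : Finset (V ⊕ W)), ¬ IsPCPartition G π := by
    intro π hπ
    obtain ⟨v0⟩ := hT.isConnected.nonempty
    -- part A containing inl v0
    obtain ⟨A, hA, hvA⟩ := π.exists_mem (Finset.mem_univ (Sum.inl v0 : V ⊕ W))
    obtain ⟨-, B, hB, hBA, -, -, -, hABpds⟩ := hπ A hA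
    have hVsub : ∀ u : V, Sum.inl u ∈ (A : Set (V ⊕ W)) ∪ (B : Set (V ⊕ W)) :=
      fun u => pds_contains_inl T f hf hABpds u
    -- a leaf outside A ∪ B
    obtain ⟨w1, w2, h12, hf1, hf2⟩ := two_leaves_exist f hf v0
    have hout : Sum.inr w1 ∉ (A : Set (V ⊕ W)) ∪ (B : Set (V ⊕ W)) ∨
        Sum.inr w2 ∉ (A : Set (V ⊕ W)) ∪ (B : Set (V ⊕ W)) := by
      by_contra h
      push_neg at h
      exact two_leaves_not_pds T f h12 (hf1.trans hf2.symm) h.1 h.2 hABpds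
    obtain ⟨w, hwout⟩ : ∃ w : W, Sum.inr w ∉ (A : Set (V ⊕ W)) ∪ (B : Set (V ⊕ W)) := by
      rcases hout with h | h
      exacts [⟨w1, h⟩, ⟨w2, h⟩]
    -- part C containing this leaf
    obtain ⟨C, hC, hwC⟩ := π.exists_mem (Finset.mem_univ (Sum.inr w : V ⊕ W))
    obtain ⟨hCnot, D, hD, hDC, -, -, -, hCDpds⟩ := hπ C hC
    -- C contains no inl vertex, so V ⊆ D
    have hCnoV : ∀ u : V, Sum.inl u ∉ C := by
      intro u hu
      rcases hVsub u with h | h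
      · exact hwout (Or.inl (by
          rw [π.eq_of_mem_parts hC hA hu h] at hwC
          exact hwC))
      · exact hwout (Or.inr (by
          rw [π.eq_of_mem_parts hC hB hu h] at hwC
          exact hwC))
    have hVD : ∀ u : V, Sum.inl u ∈ D := by
      intro u
      rcases pds_contains_inl T f hf hCDpds u with h | h
      · exact absurd h (hCnoV u)
      · exact h
    obtain ⟨hDnot, E, hE, hED, -, -, -, hDEpds⟩ := hπ D hD
    -- D must contain some leaf, else D = range inl is a PDS
    by_cases hDleaf : ∃ w0 : W, Sum.inr w0 ∈ D
    · obtain ⟨w0, hw0D⟩ := hDleaf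
      obtain ⟨w1', w2', h12', hf1', hf2'⟩ := two_leaves_exist f hf (f w0)
      obtain ⟨w', hw'ne, hw'f⟩ : ∃ w' : W, w' ≠ w0 ∧ f w' = f w0 := by
        by_cases h : w1' = w0
        · exact ⟨w2', fun hh => h12' (hh ▸ h.symm ▸ rfl), hf2'⟩
        · exact ⟨w1', h, hf1'⟩
      -- w' cannot be in D ∪ E
      have hw'out : Sum.inr w' ∉ (D : Set (V ⊕ W)) ∪ (E : Set (V ⊕ W)) := by
        intro h
        exact two_leaves_not_pds T f hw'ne hw'f h (Or.inl hw0D) hDEpds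
      -- part F containing w'
      obtain ⟨F, hF, hw'F⟩ := π.exists_mem (Finset.mem_univ (Sum.inr w' : V ⊕ W))
      obtain ⟨-, Gp, hGp, hGpF, -, -, -, hFGpds⟩ := hπ F hF
      have hFnoV : ∀ u : V, Sum.inl u ∉ F := by
        intro u hu
        have : F = D := π.eq_of_mem_parts hF hD hu (hVD u)
        exact hw'out (Or.inl (this ▸ hw'F))
      have hVGp : ∀ u : V, Sum.inl u ∈ Gp := by
        intro u
        rcases pds_contains_inl T f hf hFGpds u with h | h
        · exact absurd h (hFnoV u)
        · exact h
      have hGpD : Gp = D := π.eq_of_mem_parts hGp hD (hVGp v0) (hVD v0)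
      exact two_leaves_not_pds T f hw'ne hw'f (Or.inl hw'F)
        (Or.inr (hGpD ▸ hw0D : Sum.inr w0 ∈ (Gp : Set (V ⊕ W)))) hFGpds
    · push_neg at hDleaf
      apply hDnot
      have : (D : Set (V ⊕ W)) = Set.range Sum.inl := by
        ext x
        cases x with
        | inl u => simp [hVD u]
        | inr w0 => simp [hDleaf w0]
      rw [this]
      exact range_inl_pds T f hpm
  have : {k | ∃ π : Finpartition (Finset.univ : Finset (V ⊕ W)),
      IsPCPartition G π ∧ π.parts.card = k} = ∅ := by
    ext k
    simp only [Set.mem_setOf_eq, Set.mem_empty_iff_false, iff_false, not_exists]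
    rintro π ⟨hπ, -⟩
    exact hno π hπ
  rw [pcNumber, this, csSup_empty]
  rfl
end

section
/- Let G be a simple graph of order n that contains at least one cycle. If PC(G) = n, then the girth of G is at most 4. -/
section PCAux
open SimpleGraph PCPaper

variable {V : Type*} {G : SimpleGraph V}

private lemma pc_girth_le_cycle {a : V} (w : G.Walk a a) (hw : w.IsCycle) :
    G.girth ≤ w.length := by
  have h : G.egirth ≤ (w.length : ℕ∞) :=
    iInf_le_of_le a (iInf_le_of_le w (iInf_le _ hw))
  calc G.girth = G.egirth.toNat := rfl
    _ ≤ _ := by exact_mod_cast ENat.toNat_le_toNat h (by simp)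

private lemma pc_tri {a b c : V} (hab : G.Adj a b) (hbc : G.Adj b c) (hca : G.Adj c a) :
    G.girth ≤ 3 := by
  have hcyc : (SimpleGraph.Walk.cons hab (.cons hbc (.cons hca .nil)) : G.Walk a a).IsCycle := by
    simp [Walk.isCycle_def, Walk.isTrail_def, hab.ne, hbc.ne, hca.ne, hab.ne', hbc.ne', hca.ne']
  simpa using pc_girth_le_cycle _ hcyc

private lemma pc_square {a b c d : V} (hab : G.Adj a b) (hbc : G.Adj b c) (hcd : G.Adj c d)
    (hda : G.Adj d a) (hac : a ≠ c) (hbd : b ≠ d) : G.girth ≤ 4 := by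
  have hcyc : (SimpleGraph.Walk.cons hab (.cons hbc (.cons hcd (.cons hda .nil))) :
      G.Walk a a).IsCycle := by
    simp [Walk.isCycle_def, Walk.isTrail_def, hab.ne, hbc.ne, hcd.ne, hda.ne,
      hab.ne', hbc.ne', hcd.ne', hda.ne', hac, hbd, hac.symm, hbd.symm, Sym2.eq_iff]
  simpa using pc_girth_le_cycle _ hcyc

private lemma pc_dom_pair [Fintype V] [DecidableEq V] (G : SimpleGraph V)
    (hne : Nonempty V) (hpc : pcNumber G = Fintype.card V) :
    ∃ x y : V, G.Adj x y ∧ ∀ v : V, v = x ∨ v = y ∨ G.Adj x v ∨ G.Adj y v := by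
  have hcard : 1 ≤ Fintype.card V := Fintype.card_pos
  set S := {k | ∃ π : Finpartition (Finset.univ : Finset V),
    IsPCPartition G π ∧ π.parts.card = k} with hS
  have hbdd : BddAbove S := ⟨Fintype.card V, by
    rintro k ⟨π, -, hk⟩
    exact hk ▸ π.card_parts_le_card.trans_eq (by simp)⟩
  have hSne : S.Nonempty := by
    by_contra h
    rw [Set.not_nonempty_iff_eq_empty] at h
    have : pcNumber G = 0 := by rw [pcNumber, ← hS, h, csSup_empty]; rfl
    omega
  have hmem : pcNumber G ∈ S := Nat.sSup_mem hSne hbdd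
  obtain ⟨π, hπ, hπcard⟩ := hmem
  rw [hpc] at hπcard
  have hone : ∀ A ∈ π.parts, A.card = 1 := by
    by_contra h
    push_neg at h
    obtain ⟨A, hA, hA1⟩ := h
    have hsum : ∑ B ∈ π.parts, B.card = Fintype.card V := by
      simpa using π.sum_card_parts
    have h2 : 2 ≤ A.card := by
      have := (π.nonempty_of_mem_parts hA).card_pos
      omega
    have hlt : ∑ _B ∈ π.parts, 1 < ∑ B ∈ π.parts, B.card :=
      Finset.sum_lt_sum (fun B hB => (π.nonempty_of_mem_parts hB).card_pos)
        ⟨A, hA, by omega⟩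
    simp only [Finset.sum_const, smul_eq_mul, mul_one] at hlt
    omega
  have hpne : π.parts.Nonempty := by
    rw [← Finset.card_pos, hπcard]; omega
  obtain ⟨A, hA⟩ := hpne
  obtain ⟨-, B, hB, hBA, -, -, -, hpds⟩ := hπ A hA
  obtain ⟨x, hAx⟩ := Finset.card_eq_one.mp (hone A hA)
  obtain ⟨y, hBy⟩ := Finset.card_eq_one.mp (hone B hB)
  subst hAx hBy
  obtain ⟨hdom, M, hMv, hMm⟩ := hpds
  have hxv : x ∈ M.verts := by rw [hMv]; simp
  obtain ⟨z, hz, -⟩ := hMm hxv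
  have hzy : z = y := by
    have h1 : z ∈ M.verts := hz.snd_mem
    rw [hMv] at h1
    simp only [Finset.coe_singleton, Set.union_singleton, Set.mem_insert_iff,
      Set.mem_singleton_iff] at h1
    rcases h1 with h1 | h1
    · exact h1
    · exact absurd (M.adj_sub hz) (by simp [h1])
  rw [hzy] at hz
  refine ⟨x, y, M.adj_sub hz, fun v => ?_⟩
  rcases hdom v with h | ⟨u, hu, hadj⟩
  · simp only [Finset.coe_singleton, Set.union_singleton, Set.mem_insert_iff,
      Set.mem_singleton_iff] at h
    tauto
  · simp only [Finset.coe_singleton, Set.union_singleton, Set.mem_insert_iff,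
      Set.mem_singleton_iff] at hu
    rcases hu with rfl | rfl
    · exact Or.inr (Or.inr (Or.inr hadj))
    · exact Or.inr (Or.inr (Or.inl hadj))

private lemma pc_cycle_dropLast_nodup {a : V} {c : G.Walk a a} (hc : c.IsCycle) :
    c.support.dropLast.Nodup := by
  have ht : c.support.tail.Nodup := hc.2
  have hsup : c.support = a :: c.support.tail := c.support_eq_cons
  have htne : c.support.tail ≠ [] := by
    intro h
    have h1 : c.support.length = c.length + 1 := c.length_support
    rw [hsup, h] at h1
    have h3 := hc.three_le_length
    simp only [List.length_cons, List.length_nil] at h1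
    omega
  have hlast : c.support.tail.getLast htne = a := by
    rw [List.getLast_tail]
    exact c.getLast_support
  rw [hsup, List.dropLast_cons_of_ne_nil htne]
  refine List.nodup_cons.mpr ⟨?_, ht.sublist (List.dropLast_sublist _)⟩
  intro hmem
  have hdecomp := List.dropLast_concat_getLast htne
  rw [hlast] at hdecomp
  have := ht
  rw [← hdecomp, List.nodup_append] at this
  exact this.2.2 a hmem a (by simp) rfl

private lemma pc_cycle_short [DecidableEq V] {a x y : V} {c : G.Walk a a} (hc : c.IsCycle)
    (hinc : ∀ d : G.Dart, d ∈ c.darts → d.fst = x ∨ d.fst = y ∨ d.snd = x ∨ d.snd = y) :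
    c.length ≤ 4 := by
  classical
  have hfst : (c.darts.map (·.fst)).Nodup := by
    rw [c.map_fst_darts]; exact pc_cycle_dropLast_nodup hc
  have hsnd : (c.darts.map (·.snd)).Nodup := by
    rw [c.map_snd_darts]; exact hc.2
  have hdnd : c.darts.Nodup := hfst.of_map _
  set D := c.darts.toFinset with hD
  have hDcard : D.card = c.length := by
    rw [hD, List.toFinset_card_of_nodup hdnd, c.length_darts]
  have hfilter1 : ∀ z : V, (D.filter (fun d => d.fst = z)).card ≤ 1 := by
    intro z
    refine Finset.card_le_one.mpr fun d1 h1 d2 h2 => ?_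
    simp only [Finset.mem_filter, hD, List.mem_toFinset] at h1 h2
    exact List.inj_on_of_nodup_map hfst h1.1 h2.1 (h1.2.trans h2.2.symm)
  have hfilter2 : ∀ z : V, (D.filter (fun d => d.snd = z)).card ≤ 1 := by
    intro z
    refine Finset.card_le_one.mpr fun d1 h1 d2 h2 => ?_
    simp only [Finset.mem_filter, hD, List.mem_toFinset] at h1 h2
    exact List.inj_on_of_nodup_map hsnd h1.1 h2.1 (h1.2.trans h2.2.symm)
  have hsub : D ⊆ D.filter (fun d => d.fst = x) ∪ D.filter (fun d => d.fst = y)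
      ∪ D.filter (fun d => d.snd = x) ∪ D.filter (fun d => d.snd = y) := by
    intro d hd
    have hmem : d ∈ c.darts := by rwa [hD, List.mem_toFinset] at hd
    rcases hinc d hmem with h | h | h | h <;>
      simp [Finset.mem_union, Finset.mem_filter, hd, h]
  calc c.length = D.card := hDcard.symm
    _ ≤ _ := Finset.card_le_card hsub
    _ ≤ _ := (Finset.card_union_le _ _)
    _ ≤ 4 := by
        have h1 := Finset.card_union_le (D.filter (fun d => d.fst = x)
          ∪ D.filter (fun d => d.fst = y)) (D.filter (fun d => d.snd = x))
        have h2 := Finset.card_union_le (D.filter (fun d => d.fst = x))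
          (D.filter (fun d => d.fst = y))
        have := hfilter1 x; have := hfilter1 y; have := hfilter2 x; have := hfilter2 y
        omega

end PCAux


open PCPaper in
/-- If `G` contains a cycle and `PC(G) = n`, then the girth of `G` is at most `4`. -/
theorem stmt_16 {V : Type*} [Fintype V] [DecidableEq V] (G : SimpleGraph V)
    (hcyc : ¬ G.IsAcyclic) (hpc : pcNumber G = Fintype.card V) :
    G.girth ≤ 4 := by
  by_contra hgt
  push_neg at hgt
  have hex : ∃ a, ∃ c : G.Walk a a, c.IsCycle := by
    simp only [SimpleGraph.IsAcyclic] at hcyc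
    push_neg at hcyc
    exact hcyc
  obtain ⟨a, c, hc⟩ := hex
  obtain ⟨x, y, hxy, hdom⟩ := pc_dom_pair G ⟨a⟩ hpc
  have hinc : ∀ d : G.Dart, d ∈ c.darts → d.fst = x ∨ d.fst = y ∨ d.snd = x ∨ d.snd = y := by
    intro d _
    by_contra h
    push_neg at h
    obtain ⟨h1, h2, h3, h4⟩ := h
    have hadj := d.adj
    have hp : G.Adj x d.fst ∨ G.Adj y d.fst := by
      rcases hdom d.fst with h | h | h | h
      exacts [absurd h h1, absurd h h2, Or.inl h, Or.inr h]
    have hq : G.Adj x d.snd ∨ G.Adj y d.snd := by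
      rcases hdom d.snd with h | h | h | h
      exacts [absurd h h3, absurd h h4, Or.inl h, Or.inr h]
    rcases hp with hp | hp <;> rcases hq with hq | hq
    · have := pc_tri hp hadj hq.symm; omega
    · have := pc_square hp hadj hq.symm hxy.symm (Ne.symm h3) h2; omega
    · have := pc_square hp hadj hq.symm hxy (Ne.symm h4) h1; omega
    · have := pc_tri hp hadj hq.symm; omega
  have hlen := pc_cycle_short hc hinc
  have hg := pc_girth_le_cycle c hc
  omega
end

section
/- Let G be a simple graph of order n with girth exactly 4. Then PC(G) = n if and only if G is a complete bipartite graph. -/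
namespace PCPaper

/-- `G` is a complete bipartite graph: its vertex set splits into two nonempty
independent sets with all edges between them. -/
def IsCompleteBipartite {V : Type*} (G : SimpleGraph V) : Prop :=
  ∃ s : Set V, s.Nonempty ∧ sᶜ.Nonempty ∧
    ∀ u v : V, G.Adj u v ↔ ((u ∈ s ∧ v ∉ s) ∨ (u ∉ s ∧ v ∈ s))

end PCPaper

namespace PCPaper

open Finset SimpleGraph

variable {V : Type*}

lemma triangle_free {G : SimpleGraph V} (hg : G.girth = 4) {u v w : V}
    (h1 : G.Adj u v) (h2 : G.Adj v w) (h3 : G.Adj w u) : False := by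
  have hc : ∃ (a : V) (c : G.Walk a a), c.IsCycle ∧ c.length = 3 := by
    refine ⟨u, .cons h1 (.cons h2 (.cons h3 .nil)), ?_, rfl⟩
    have := h1.ne; have := h2.ne; have := h3.ne; have : u ≠ w := h3.ne.symm
    simp [Walk.isCycle_def, Walk.isPath_def, Walk.isTrail_def, *]
    aesop
  obtain ⟨a, c, hcyc, hlen⟩ := hc
  have h4 : G.egirth ≤ 3 := by
    refine le_trans ?_ (le_of_eq (by exact_mod_cast congrArg _ hlen))
    exact iInf_le_of_le a (iInf_le_of_le c (iInf_le_of_le hcyc le_rfl))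
  have : G.girth ≤ 3 := by
    have := ENat.toNat_le_toNat h4 (by decide)
    simpa [SimpleGraph.girth] using this
  omega

lemma V_nonempty {G : SimpleGraph V} (hg : G.girth = 4) : Nonempty V := by
  have : ¬ G.IsAcyclic := by
    intro h
    rw [h.girth_eq_zero] at hg
    omega
  obtain ⟨a, _, _, _⟩ := SimpleGraph.exists_girth_eq_length.mpr this
  exact ⟨a⟩

lemma singleton_not_pds (G : SimpleGraph V) (u : V) : ¬ IsPairedDomSet G {u} := by
  rintro ⟨-, M, hMv, hM⟩
  obtain ⟨w, hw, -⟩ := hM (show u ∈ M.verts by rw [hMv]; rfl)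
  have hwv : w ∈ M.verts := M.edge_vert hw.symm
  rw [hMv, Set.mem_singleton_iff] at hwv
  subst hwv
  exact G.loopless.irrefl w (M.adj_sub hw)

lemma pds_pair_adj {G : SimpleGraph V} {u v : V} (huv : u ≠ v)
    (h : IsPairedDomSet G ({u} ∪ {v} : Set V)) : G.Adj u v := by
  obtain ⟨-, M, hMv, hM⟩ := h
  obtain ⟨w, hw, -⟩ := hM (show u ∈ M.verts by rw [hMv]; left; rfl)
  have hwv : w ∈ M.verts := M.edge_vert hw.symm
  rw [hMv] at hwv
  simp only [Set.mem_union, Set.mem_singleton_iff] at hwv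
  rcases hwv with h | h
  · rw [h] at hw; exact absurd (M.adj_sub hw) (G.loopless.irrefl u)
  · rw [h] at hw; exact M.adj_sub hw

lemma pds_of_adj_dom {G : SimpleGraph V} {u v : V} (h : G.Adj u v)
    (hd : IsDomSet G ({u} ∪ {v} : Set V)) : IsPairedDomSet G ({u} ∪ {v} : Set V) := by
  refine ⟨hd, G.subgraphOfAdj h, ?_, Subgraph.IsMatching.subgraphOfAdj h⟩
  simp [Set.singleton_union, Set.pair_comm]

/-- The key combinatorial lemma. -/
lemma key {G : SimpleGraph V} (hg : G.girth = 4)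
    (H : ∀ x : V, ∃ y, G.Adj x y ∧ IsDomSet G ({x} ∪ {y} : Set V)) :
    IsCompleteBipartite G := by
  obtain ⟨u⟩ := V_nonempty hg
  obtain ⟨v, huv, hdom⟩ := H u
  refine ⟨{x | G.Adj v x}, ⟨u, huv.symm⟩, ⟨v, fun h => G.loopless.irrefl v h⟩, ?_⟩
  have hc : ∀ x, x ∉ {x | G.Adj v x} ↔ G.Adj u x := by
    intro x
    constructor
    · intro hx
      rcases hdom x with hx' | ⟨z, hz, hzx⟩
      · simp only [Set.mem_union, Set.mem_singleton_iff] at hx'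
        rcases hx' with h | h
        · exact absurd (h ▸ huv.symm : G.Adj v x) hx
        · exact h ▸ huv
      · simp only [Set.mem_union, Set.mem_singleton_iff] at hz
        rcases hz with rfl | rfl
        · exact hzx
        · exact absurd hzx hx
    · intro hux hvx
      exact triangle_free hg huv hvx (hux.symm)
  intro x y
  constructor
  · intro hxy
    by_cases hx : x ∈ {x | G.Adj v x} <;> by_cases hy : y ∈ {x | G.Adj v x}
    · exact absurd (triangle_free hg hx hxy (hy.symm)) not_false
    · exact Or.inl ⟨hx, hy⟩
    · exact Or.inr ⟨hx, hy⟩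
    · exact absurd (triangle_free hg ((hc x).mp hx) hxy ((hc y).mp hy).symm) not_false
  · have main : ∀ a b : V, a ∈ {x | G.Adj v x} → b ∉ {x | G.Adj v x} → G.Adj a b := by
      intro a b ha hb
      obtain ⟨a', haa', hda⟩ := H a
      have ha' : a' ∉ {x | G.Adj v x} := fun h => triangle_free hg ha haa' h.symm
      rcases hda b with hb' | ⟨z, hz, hzb⟩
      · simp only [Set.mem_union, Set.mem_singleton_iff] at hb'
        rcases hb' with h | h
        · exact absurd ha (h ▸ hb)
        · exact h.symm ▸ haa'
      · simp only [Set.mem_union, Set.mem_singleton_iff] at hz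
        rcases hz with h | h
        · exact h ▸ hzb
        · exact absurd (triangle_free hg ((hc a').mp ha') (h ▸ hzb) ((hc b).mp hb).symm) not_false
    rintro (⟨hx, hy⟩ | ⟨hx, hy⟩)
    · exact main x y hx hy
    · exact (main y x hy hx).symm

variable [Fintype V] [DecidableEq V]

/-- The partition of `univ` into singletons. -/
def singPart (V : Type*) [Fintype V] [DecidableEq V] :
    Finpartition (Finset.univ : Finset V) where
  parts := Finset.univ.image fun v => {v}
  supIndep := by
    apply Finset.supIndep_iff_pairwiseDisjoint.mpr
    intro a ha b hb hab
    simp only [mem_coe, mem_image, mem_univ, true_and] at ha hb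
    obtain ⟨x, rfl⟩ := ha; obtain ⟨y, rfl⟩ := hb
    simp only [Function.onFun, id, Finset.disjoint_singleton]
    exact fun h => hab (by simp_all)
  sup_parts := by
    ext x
    simp only [mem_sup, mem_image, mem_univ, true_and, mem_singleton, iff_true]
    exact ⟨{x}, ⟨x, rfl⟩, by simp⟩
  bot_notMem := by
    simp only [bot_eq_empty, mem_image, mem_univ, true_and, not_exists]
    intro x h
    exact absurd (h ▸ Finset.mem_singleton_self x) (Finset.notMem_empty x)

lemma singPart_card : (singPart V).parts.card = Fintype.card V := by
  show (Finset.univ.image fun v => ({v} : Finset V)).card = _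
  rw [Finset.card_image_of_injective _ fun a b h => by simpa using h, Finset.card_univ]

lemma mem_singPart {A : Finset V} (h : A ∈ (singPart V).parts) : ∃ v, A = {v} := by
  obtain ⟨v, -, rfl⟩ := Finset.mem_image.mp h; exact ⟨v, rfl⟩

lemma singleton_mem_singPart (v : V) : ({v} : Finset V) ∈ (singPart V).parts :=
  Finset.mem_image.mpr ⟨v, Finset.mem_univ v, rfl⟩

lemma pcNumber_bddAbove (G : SimpleGraph V) :
    ∀ k ∈ {k | ∃ π : Finpartition (Finset.univ : Finset V),
      IsPCPartition G π ∧ π.parts.card = k}, k ≤ Fintype.card V := by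
  rintro k ⟨π, -, rfl⟩
  simpa using π.card_parts_le_card

end PCPaper

open PCPaper in
/-- For a graph `G` of order `n` with girth exactly `4`, `PC(G) = n` iff `G` is a
complete bipartite graph. -/
theorem stmt_17 {V : Type*} [Fintype V] [DecidableEq V] (G : SimpleGraph V)
    (hg : G.girth = 4) :
    pcNumber G = Fintype.card V ↔ IsCompleteBipartite G := by
  have hbdd : BddAbove {k | ∃ π : Finpartition (Finset.univ : Finset V),
      IsPCPartition G π ∧ π.parts.card = k} := ⟨Fintype.card V, pcNumber_bddAbove G⟩
  constructor
  · intro hpc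
    have hne := V_nonempty hg
    have hcard : 0 < Fintype.card V := Fintype.card_pos
    rw [pcNumber] at hpc
    have hSne : {k | ∃ π : Finpartition (Finset.univ : Finset V),
        IsPCPartition G π ∧ π.parts.card = k}.Nonempty := by
      by_contra h
      rw [Set.not_nonempty_iff_eq_empty] at h
      rw [h, csSup_empty] at hpc
      simp at hpc
      omega
    have hmem : Fintype.card V ∈ {k | ∃ π : Finpartition (Finset.univ : Finset V),
        IsPCPartition G π ∧ π.parts.card = k} := hpc ▸ Nat.sSup_mem hSne hbdd
    obtain ⟨π, hπ, hπcard⟩ := hmem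
    have hparts1 : ∀ A ∈ π.parts, A.card = 1 := by
      by_contra h
      push_neg at h
      obtain ⟨A, hA, hA1⟩ := h
      have h2 : 2 ≤ A.card := by
        have := Finset.card_pos.mpr (π.nonempty_of_mem_parts hA)
        omega
      have hsum : ∑ B ∈ π.parts, B.card = Fintype.card V := by
        rw [π.sum_card_parts, Finset.card_univ]
      have hlt : π.parts.card < ∑ B ∈ π.parts, B.card := by
        rw [Finset.card_eq_sum_ones]
        exact Finset.sum_lt_sum
          (fun B hB => Finset.card_pos.mpr (π.nonempty_of_mem_parts hB)) ⟨A, hA, by omega⟩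
      omega
    apply key hg
    intro x
    obtain ⟨A, hA, hxA⟩ := π.exists_mem (Finset.mem_univ x)
    have hAx : A = {x} := by
      obtain ⟨a, rfl⟩ := Finset.card_eq_one.mp (hparts1 A hA)
      rw [Finset.mem_singleton] at hxA
      rw [hxA]
    obtain ⟨-, B, hB, hBA, hcoal⟩ := hπ A hA
    obtain ⟨b, rfl⟩ := Finset.card_eq_one.mp (hparts1 B hB)
    have hbx : x ≠ b := by
      rintro rfl
      exact hBA hAx.symm
    obtain ⟨-, -, -, hpds⟩ := hcoal
    rw [hAx] at hpds
    simp only [Finset.coe_singleton] at hpds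
    exact ⟨b, pds_pair_adj hbx hpds, hpds.1⟩
  · rintro ⟨s, hs, hsc, hadj⟩
    have H : ∀ x : V, ∃ y, G.Adj x y ∧ IsDomSet G ({x} ∪ {y} : Set V) := by
      intro x
      by_cases hx : x ∈ s
      · obtain ⟨y, hy⟩ := hsc
        refine ⟨y, (hadj x y).mpr (Or.inl ⟨hx, hy⟩), fun z => ?_⟩
        by_cases hz : z ∈ s
        · exact Or.inr ⟨y, by simp, (hadj y z).mpr (Or.inr ⟨hy, hz⟩)⟩
        · exact Or.inr ⟨x, by simp, (hadj x z).mpr (Or.inl ⟨hx, hz⟩)⟩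
      · obtain ⟨y, hy⟩ := hs
        refine ⟨y, (hadj x y).mpr (Or.inr ⟨hx, hy⟩), fun z => ?_⟩
        by_cases hz : z ∈ s
        · exact Or.inr ⟨x, by simp, (hadj x z).mpr (Or.inr ⟨hx, hz⟩)⟩
        · exact Or.inr ⟨y, by simp, (hadj y z).mpr (Or.inl ⟨hy, hz⟩)⟩
    have hpcp : IsPCPartition G (singPart V) := by
      intro A hA
      obtain ⟨a, rfl⟩ := mem_singPart hA
      obtain ⟨b, hab, hdom⟩ := H a
      constructor
      · simpa only [Finset.coe_singleton] using singleton_not_pds G a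
      · refine ⟨{b}, singleton_mem_singPart b, ?_, ?_⟩
        · intro h
          rw [Finset.singleton_inj] at h
          exact hab.ne' h
        · simp only [Finset.coe_singleton]
          exact ⟨Set.disjoint_singleton.mpr hab.ne, singleton_not_pds G a,
            singleton_not_pds G b, pds_of_adj_dom hab hdom⟩
    have hmem : Fintype.card V ∈ {k | ∃ π : Finpartition (Finset.univ : Finset V),
        IsPCPartition G π ∧ π.parts.card = k} := ⟨singPart V, hpcp, singPart_card⟩
    exact le_antisymm (csSup_le ⟨_, hmem⟩ (pcNumber_bddAbove G)) (le_csSup hbdd hmem)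
end
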